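/- arXiv:2601.04866 — 11 statements merged into one kernel-verified Lean document; each statement's English description precedes it below -/
import Mathlib

section
/- Let V be a real inner product space, and let r ≥ 2, α > 0, δ ≥ 0 be real parameters, and let μ : V → ℝ be replaced by a constant viscosity value μ with 0 < μ₋ ≤ μ ≤ μ₊. Define the Carreau–Yasuda map σ(τ) = μ (δ^α + ‖τ‖^α)^{(r−2)/α} τ. Then for all τ, η ∈ V one has the Hölder continuity bound ‖σ(τ) − σ(η)‖ ≤ σ_c (δ^r + ‖τ‖^r + ‖η‖^r)^{(r−2)/r} ‖τ − η‖, where σ_c = μ₊ (r−1) 2^{(max(0, 1/α − 1/r))(r−2)}. -/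
open scoped RealInnerProductSpace

private lemma cy_two_mean {a b p : ℝ} (ha : 0 ≤ a) (hb : 0 ≤ b) (hp : 0 < p) :
    (a + b) ^ p ≤ 2 ^ (max 0 (p - 1)) * (a ^ p + b ^ p) := by
  lift a to NNReal using ha
  lift b to NNReal using hb
  rcases le_total p 1 with h1 | h1
  · have h := NNReal.rpow_add_le_add_rpow a b hp.le h1
    have hm : max 0 (p - 1) = 0 := max_eq_left (by linarith)
    rw [hm, Real.rpow_zero, one_mul]
    exact_mod_cast h
  · have h := NNReal.rpow_add_le_mul_rpow_add_rpow a b h1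
    have hm : max 0 (p - 1) = p - 1 := max_eq_right (by linarith)
    rw [hm]
    exact_mod_cast h

private lemma cy_slope {r α δ : ℝ} (hr : 2 ≤ r) (hα : 0 < α) (hδ : 0 ≤ δ)
    {t s : ℝ} (ht : 0 ≤ t) (hts : t ≤ s) :
    ((δ ^ α + s ^ α) ^ ((r - 2) / α) - (δ ^ α + t ^ α) ^ ((r - 2) / α)) * t
      ≤ (r - 2) * (δ ^ α + s ^ α) ^ ((r - 2) / α) * (s - t) := by
  have hr2 : (0 : ℝ) ≤ r - 2 := by linarith
  set q : ℝ := (r - 2) / α with hqdef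
  have hq : 0 ≤ q := div_nonneg hr2 hα.le
  rcases ht.eq_or_lt with rfl | ht'
  · rw [mul_zero]
    have : (0 : ℝ) ≤ (r - 2) * (δ ^ α + s ^ α) ^ q * (s - 0) := by
      exact mul_nonneg (mul_nonneg hr2 (Real.rpow_nonneg
        (add_nonneg (Real.rpow_nonneg hδ _) (Real.rpow_nonneg hts _)) _)) (by linarith)
    simpa using this
  rcases hts.eq_or_lt with rfl | hts'
  · simp
  -- now 0 < t < s
  have key : ∀ u : ℝ, t ≤ u →
      HasDerivAt (fun x : ℝ => (δ ^ α + x ^ α) ^ q)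
        (q * (δ ^ α + u ^ α) ^ (q - 1) * (α * u ^ (α - 1))) u := by
    intro u hu
    have hu0 : 0 < u := lt_of_lt_of_le ht' hu
    have h1 : HasDerivAt (fun x : ℝ => δ ^ α + x ^ α) (α * u ^ (α - 1)) u :=
      (Real.hasDerivAt_rpow_const (Or.inl hu0.ne')).const_add _
    have hbase : 0 < δ ^ α + u ^ α :=
      add_pos_of_nonneg_of_pos (Real.rpow_nonneg hδ α) (Real.rpow_pos_of_pos hu0 α)
    have h2 : HasDerivAt (fun x : ℝ => x ^ q) (q * (δ ^ α + u ^ α) ^ (q - 1))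
        (δ ^ α + u ^ α) := Real.hasDerivAt_rpow_const (Or.inl hbase.ne')
    exact h2.comp u h1
  obtain ⟨ξ, hξ, hslope⟩ :=
    exists_hasDerivAt_eq_slope (fun x : ℝ => (δ ^ α + x ^ α) ^ q)
      (fun u => q * (δ ^ α + u ^ α) ^ (q - 1) * (α * u ^ (α - 1))) hts'
      (fun u hu => (key u hu.1).continuousAt.continuousWithinAt)
      (fun u hu => key u hu.1.le)
  have hst0 : s - t ≠ 0 := by intro h; exact (sub_ne_zero.2 hts'.ne') h
  have hdiff : (δ ^ α + s ^ α) ^ q - (δ ^ α + t ^ α) ^ q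
      = q * (δ ^ α + ξ ^ α) ^ (q - 1) * (α * ξ ^ (α - 1)) * (s - t) := by
    rw [hslope]; field_simp
  have hξ0 : 0 < ξ := lt_trans ht' hξ.1
  have hB : 0 < δ ^ α + ξ ^ α :=
    add_pos_of_nonneg_of_pos (Real.rpow_nonneg hδ α) (Real.rpow_pos_of_pos hξ0 α)
  have hBs : δ ^ α + ξ ^ α ≤ δ ^ α + s ^ α :=
    add_le_add_right (Real.rpow_le_rpow hξ0.le hξ.2.le hα.le) _
  have e1 : ξ ^ (α - 1) * t ≤ δ ^ α + ξ ^ α := by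
    calc ξ ^ (α - 1) * t ≤ ξ ^ (α - 1) * ξ :=
          mul_le_mul_of_nonneg_left hξ.1.le (Real.rpow_nonneg hξ0.le _)
      _ = ξ ^ α := by rw [Real.rpow_sub_one hξ0.ne', div_mul_cancel₀ _ hξ0.ne']
      _ ≤ δ ^ α + ξ ^ α := le_add_of_nonneg_left (Real.rpow_nonneg hδ _)
  have e2 : (δ ^ α + ξ ^ α) ^ (q - 1) * (ξ ^ (α - 1) * t)
      ≤ (δ ^ α + s ^ α) ^ q := by
    calc (δ ^ α + ξ ^ α) ^ (q - 1) * (ξ ^ (α - 1) * t)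
        ≤ (δ ^ α + ξ ^ α) ^ (q - 1) * (δ ^ α + ξ ^ α) :=
          mul_le_mul_of_nonneg_left e1 (Real.rpow_nonneg hB.le _)
      _ = (δ ^ α + ξ ^ α) ^ q := by
          rw [Real.rpow_sub_one hB.ne', div_mul_cancel₀ _ hB.ne']
      _ ≤ (δ ^ α + s ^ α) ^ q := Real.rpow_le_rpow hB.le hBs hq
  have hqα : q * α = r - 2 := div_mul_cancel₀ _ hα.ne'
  calc ((δ ^ α + s ^ α) ^ q - (δ ^ α + t ^ α) ^ q) * t
      = (q * α) * ((δ ^ α + ξ ^ α) ^ (q - 1) * (ξ ^ (α - 1) * t)) * (s - t) := by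
        rw [hdiff]; ring
    _ = (r - 2) * ((δ ^ α + ξ ^ α) ^ (q - 1) * (ξ ^ (α - 1) * t)) * (s - t) := by
        rw [hqα]
    _ ≤ (r - 2) * (δ ^ α + s ^ α) ^ q * (s - t) := by
        apply mul_le_mul_of_nonneg_right _ (by linarith)
        exact mul_le_mul_of_nonneg_left e2 hr2

private lemma cy_compare {r α δ : ℝ} (hr : 2 ≤ r) (hα : 0 < α) (hδ : 0 ≤ δ)
    {s : ℝ} (hs : 0 ≤ s) :
    (δ ^ α + s ^ α) ^ ((r - 2) / α)
      ≤ 2 ^ (max 0 (1 / α - 1 / r) * (r - 2)) * (δ ^ r + s ^ r) ^ ((r - 2) / r) := by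
  have hr0 : (0 : ℝ) < r := by linarith
  have hr2 : (0 : ℝ) ≤ r - 2 := by linarith
  have hp : 0 < r / α := div_pos hr0 hα
  have hK : (0 : ℝ) ≤ δ ^ α + s ^ α :=
    add_nonneg (Real.rpow_nonneg hδ _) (Real.rpow_nonneg hs _)
  have ha : (δ ^ α) ^ (r / α) = δ ^ r := by
    rw [← Real.rpow_mul hδ]
    congr 1
    field_simp
  have hb : (s ^ α) ^ (r / α) = s ^ r := by
    rw [← Real.rpow_mul hs]
    congr 1
    field_simp
  have h1 : (δ ^ α + s ^ α) ^ (r / α) ≤ 2 ^ (max 0 (r / α - 1)) * (δ ^ r + s ^ r) := by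
    have h := cy_two_mean (Real.rpow_nonneg hδ α) (Real.rpow_nonneg hs α) hp
    rwa [ha, hb] at h
  have hq : 0 ≤ (r - 2) / r := div_nonneg hr2 hr0.le
  have h2 := Real.rpow_le_rpow (Real.rpow_nonneg hK _) h1 hq
  have hL : ((δ ^ α + s ^ α) ^ (r / α)) ^ ((r - 2) / r) = (δ ^ α + s ^ α) ^ ((r - 2) / α) := by
    rw [← Real.rpow_mul hK]
    congr 1
    field_simp
  have hR : (2 ^ (max 0 (r / α - 1)) * (δ ^ r + s ^ r)) ^ ((r - 2) / r)
      = 2 ^ (max 0 (1 / α - 1 / r) * (r - 2)) * (δ ^ r + s ^ r) ^ ((r - 2) / r) := by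
    rw [Real.mul_rpow (Real.rpow_nonneg (by norm_num) _)
      (add_nonneg (Real.rpow_nonneg hδ _) (Real.rpow_nonneg hs _)),
      ← Real.rpow_mul (by norm_num : (0:ℝ) ≤ 2)]
    congr 2
    rw [max_mul_of_nonneg _ _ hq, max_mul_of_nonneg _ _ hr2, zero_mul, zero_mul]
    congr 1
    field_simp
  rw [hL, hR] at h2
  exact h2

private lemma cy_aux {V : Type*} [NormedAddCommGroup V] [InnerProductSpace ℝ V]
    (r α δ μ μp : ℝ) (hr : 2 ≤ r) (hα : 0 < α) (hδ : 0 ≤ δ)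
    (hμ0 : 0 ≤ μ) (hμ2 : μ ≤ μp) (τ η : V) (hle : ‖η‖ ≤ ‖τ‖) :
    ‖(μ * (δ ^ α + ‖τ‖ ^ α) ^ ((r - 2) / α)) • τ
        - (μ * (δ ^ α + ‖η‖ ^ α) ^ ((r - 2) / α)) • η‖ ≤
      (μp * (r - 1) * (2 : ℝ) ^ ((max 0 (1 / α - 1 / r)) * (r - 2))) *
        (δ ^ r + ‖τ‖ ^ r + ‖η‖ ^ r) ^ ((r - 2) / r) * ‖τ - η‖ := by
  have hr2 : (0 : ℝ) ≤ r - 2 := by linarith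
  have hr0 : (0 : ℝ) < r := by linarith
  set q : ℝ := (r - 2) / α with hqdef
  have hq : 0 ≤ q := div_nonneg hr2 hα.le
  set A : ℝ := (δ ^ α + ‖τ‖ ^ α) ^ q with hAdef
  set B : ℝ := (δ ^ α + ‖η‖ ^ α) ^ q with hBdef
  have hA0 : 0 ≤ A := Real.rpow_nonneg
    (add_nonneg (Real.rpow_nonneg hδ _) (Real.rpow_nonneg (norm_nonneg _) _)) _
  have hBA : B ≤ A := by
    apply Real.rpow_le_rpow
      (add_nonneg (Real.rpow_nonneg hδ _) (Real.rpow_nonneg (norm_nonneg _) _))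
      (add_le_add_right (Real.rpow_le_rpow (norm_nonneg _) hle hα.le) _) hq
  have hsplit : (μ * A) • τ - (μ * B) • η = (μ * A) • (τ - η) + (μ * (A - B)) • η := by
    module
  rw [hsplit]
  have hsl := cy_slope hr hα hδ (norm_nonneg η) hle
  have hst : ‖τ‖ - ‖η‖ ≤ ‖τ - η‖ := norm_sub_norm_le τ η
  have hcmp : A ≤ 2 ^ (max 0 (1 / α - 1 / r) * (r - 2)) *
      (δ ^ r + ‖τ‖ ^ r + ‖η‖ ^ r) ^ ((r - 2) / r) := by
    calc A ≤ 2 ^ (max 0 (1 / α - 1 / r) * (r - 2)) * (δ ^ r + ‖τ‖ ^ r) ^ ((r - 2) / r) :=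
          cy_compare hr hα hδ (norm_nonneg τ)
      _ ≤ 2 ^ (max 0 (1 / α - 1 / r) * (r - 2)) *
            (δ ^ r + ‖τ‖ ^ r + ‖η‖ ^ r) ^ ((r - 2) / r) := by
          apply mul_le_mul_of_nonneg_left _ (Real.rpow_nonneg (by norm_num) _)
          apply Real.rpow_le_rpow
            (add_nonneg (Real.rpow_nonneg hδ _) (Real.rpow_nonneg (norm_nonneg _) _))
            (le_add_of_nonneg_right (Real.rpow_nonneg (norm_nonneg _) _))
            (div_nonneg hr2 hr0.le)
  calc ‖(μ * A) • (τ - η) + (μ * (A - B)) • η‖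
      ≤ ‖(μ * A) • (τ - η)‖ + ‖(μ * (A - B)) • η‖ := norm_add_le _ _
    _ = μ * A * ‖τ - η‖ + μ * (A - B) * ‖η‖ := by
        rw [norm_smul, norm_smul, Real.norm_eq_abs, Real.norm_eq_abs,
          abs_of_nonneg (mul_nonneg hμ0 hA0),
          abs_of_nonneg (mul_nonneg hμ0 (sub_nonneg.2 hBA))]
    _ ≤ μ * A * ‖τ - η‖ + μ * ((r - 2) * A * (‖τ‖ - ‖η‖)) := by
        apply add_le_add_right
        rw [mul_assoc]
        exact mul_le_mul_of_nonneg_left hsl hμ0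
    _ ≤ μ * A * ‖τ - η‖ + μ * ((r - 2) * A * ‖τ - η‖) := by
        apply add_le_add_right
        apply mul_le_mul_of_nonneg_left _ hμ0
        exact mul_le_mul_of_nonneg_left hst (mul_nonneg hr2 hA0)
    _ = μ * (r - 1) * A * ‖τ - η‖ := by ring
    _ ≤ μp * (r - 1) * (2 ^ (max 0 (1 / α - 1 / r) * (r - 2)) *
          (δ ^ r + ‖τ‖ ^ r + ‖η‖ ^ r) ^ ((r - 2) / r)) * ‖τ - η‖ := by
        apply mul_le_mul_of_nonneg_right _ (norm_nonneg _)
        have h1 : μ * (r - 1) ≤ μp * (r - 1) :=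
          mul_le_mul_of_nonneg_right hμ2 (by linarith)
        have h2 : 0 ≤ μp * (r - 1) := le_trans (mul_nonneg hμ0 (by linarith)) h1
        calc μ * (r - 1) * A
            ≤ μ * (r - 1) * (2 ^ (max 0 (1 / α - 1 / r) * (r - 2)) *
              (δ ^ r + ‖τ‖ ^ r + ‖η‖ ^ r) ^ ((r - 2) / r)) :=
              mul_le_mul_of_nonneg_left hcmp (mul_nonneg hμ0 (by linarith))
          _ ≤ μp * (r - 1) * (2 ^ (max 0 (1 / α - 1 / r) * (r - 2)) *
              (δ ^ r + ‖τ‖ ^ r + ‖η‖ ^ r) ^ ((r - 2) / r)) := by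
              apply mul_le_mul_of_nonneg_right h1
              exact mul_nonneg (Real.rpow_nonneg (by norm_num) _) (Real.rpow_nonneg
                (add_nonneg (add_nonneg (Real.rpow_nonneg hδ _)
                  (Real.rpow_nonneg (norm_nonneg _) _))
                  (Real.rpow_nonneg (norm_nonneg _) _)) _)
    _ = (μp * (r - 1) * (2 : ℝ) ^ ((max 0 (1 / α - 1 / r)) * (r - 2))) *
          (δ ^ r + ‖τ‖ ^ r + ‖η‖ ^ r) ^ ((r - 2) / r) * ‖τ - η‖ := by ring

/-- Hölder continuity of the Carreau–Yasuda map
`σ(τ) = μ (δ^α + ‖τ‖^α)^((r−2)/α) τ` with constant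
`σ_c = μ₊ (r−1) 2^{(max 0 (1/α − 1/r))(r−2)}`. -/
theorem carreau_yasuda_holder_continuity
    {V : Type*} [NormedAddCommGroup V] [InnerProductSpace ℝ V]
    (r α δ μ μm μp : ℝ) (hr : 2 ≤ r) (hα : 0 < α) (hδ : 0 ≤ δ)
    (hμm : 0 < μm) (hμ1 : μm ≤ μ) (hμ2 : μ ≤ μp)
    (σ : V → V)
    (hσ : ∀ τ : V, σ τ = (μ * (δ ^ α + ‖τ‖ ^ α) ^ ((r - 2) / α)) • τ) :
    ∀ τ η : V,
      ‖σ τ - σ η‖ ≤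
        (μp * (r - 1) * (2 : ℝ) ^ ((max 0 (1 / α - 1 / r)) * (r - 2))) *
          (δ ^ r + ‖τ‖ ^ r + ‖η‖ ^ r) ^ ((r - 2) / r) * ‖τ - η‖ := by
  intro τ η
  have hμ0 : 0 ≤ μ := le_trans hμm.le hμ1
  rw [hσ τ, hσ η]
  rcases le_total ‖η‖ ‖τ‖ with h | h
  · exact cy_aux r α δ μ μp hr hα hδ hμ0 hμ2 τ η h
  · have h2 := cy_aux r α δ μ μp hr hα hδ hμ0 hμ2 η τ h
    rw [norm_sub_rev, norm_sub_rev τ η]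
    rwa [add_right_comm (δ ^ r) (‖η‖ ^ r) (‖τ‖ ^ r)] at h2
end

section
/- Let V be a real inner product space, and let r ≥ 2, α > 0, δ ≥ 0 be real parameters, and let μ be a constant viscosity value with 0 < μ₋ ≤ μ ≤ μ₊. Define the Carreau–Yasuda map σ(τ) = μ (δ^α + ‖τ‖^α)^{(r−2)/α} τ. Then for all τ, η ∈ V one has the strong monotonicity bound ⟨σ(τ) − σ(η), τ − η⟩ ≥ σ_m (δ^r + ‖τ‖^r + ‖η‖^r)^{(r−2)/r} ‖τ − η‖², where σ_m = (μ₋/(r−1)) 2^{(−min(0,1/α−1/r)·(−1) − 1)(r−2) − 1}, i.e. σ_m = (μ₋/(r−1)) 2^{[−(1/α−1/r)⁻ − 1](r−2) − 1} with ξ⁻ = −min(0, ξ). -/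
open scoped RealInnerProductSpace

set_option maxHeartbeats 1000000 in
/-- Strong monotonicity of the Carreau–Yasuda map
`σ(τ) = μ (δ^α + ‖τ‖^α)^((r−2)/α) τ` with constant
`σ_m = (μ₋/(r−1)) 2^{[−(1/α−1/r)⁻ − 1](r−2) − 1}`, where `ξ⁻ = −min(0, ξ)`. -/
theorem carreau_yasuda_strong_monotonicity
    {V : Type*} [NormedAddCommGroup V] [InnerProductSpace ℝ V]
    (r α δ μ μm μp : ℝ) (hr : 2 ≤ r) (hα : 0 < α) (hδ : 0 ≤ δ)
    (hμm : 0 < μm) (hμ1 : μm ≤ μ) (hμ2 : μ ≤ μp)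
    (σ : V → V)
    (hσ : ∀ τ : V, σ τ = (μ * (δ ^ α + ‖τ‖ ^ α) ^ ((r - 2) / α)) • τ) :
    ∀ τ η : V,
      (μm / (r - 1) * (2 : ℝ) ^ ((-(-(min 0 (1 / α - 1 / r))) - 1) * (r - 2) - 1)) *
          (δ ^ r + ‖τ‖ ^ r + ‖η‖ ^ r) ^ ((r - 2) / r) * ‖τ - η‖ ^ 2 ≤
        ⟪σ τ - σ η, τ - η⟫ := by
  intro τ η
  simp only [neg_neg]
  have hr0 : (0:ℝ) < r := lt_of_lt_of_le (by norm_num) hr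
  have hr2 : (0:ℝ) ≤ r - 2 := by linarith
  have hμ0 : (0:ℝ) < μ := lt_of_lt_of_le hμm hμ1
  set a := ‖τ‖ with ha
  set b := ‖η‖ with hb
  have ha0 : (0:ℝ) ≤ a := norm_nonneg τ
  have hb0 : (0:ℝ) ≤ b := norm_nonneg η
  set e : ℝ := (r - 2) / α with he
  have he0 : (0:ℝ) ≤ e := div_nonneg hr2 hα.le
  set F : ℝ → ℝ := fun s => (δ ^ α + s ^ α) ^ e with hF
  have hFpos : ∀ s : ℝ, 0 ≤ s → 0 ≤ F s := fun s hs =>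
    Real.rpow_nonneg (add_nonneg (Real.rpow_nonneg hδ α) (Real.rpow_nonneg hs α)) e
  have hFmono : ∀ s t : ℝ, 0 ≤ s → s ≤ t → F s ≤ F t := by
    intro s t hs hst
    exact Real.rpow_le_rpow
      (add_nonneg (Real.rpow_nonneg hδ α) (Real.rpow_nonneg hs α))
      (by have := Real.rpow_le_rpow hs hst hα.le; linarith) he0
  set c : ℝ := μ * F a with hc
  set d : ℝ := μ * F b with hd
  -- Step A : algebraic identity for the inner product
  have expand : ⟪σ τ - σ η, τ - η⟫ =
      (c + d) / 2 * ‖τ - η‖ ^ 2 + (c - d) * (a ^ 2 - b ^ 2) / 2 := by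
    rw [hσ τ, hσ η]
    have hn : ‖τ - η‖ ^ 2 = a ^ 2 - 2 * ⟪τ, η⟫ + b ^ 2 := by
      rw [norm_sub_sq_real, ← ha, ← hb]
    simp only [inner_sub_left, inner_sub_right, real_inner_smul_left,
      real_inner_self_eq_norm_sq, hn, hc, hd, hF, ← ha, ← hb]
    rw [real_inner_comm η τ]
    ring
  -- Step B : monotonicity term is nonnegative
  have hmono : 0 ≤ (c - d) * (a ^ 2 - b ^ 2) := by
    rcases le_total a b with h | h
    · have h1 : c ≤ d := mul_le_mul_of_nonneg_left (hFmono a b ha0 h) hμ0.le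
      have h2 : a ^ 2 ≤ b ^ 2 := by nlinarith
      nlinarith
    · have h1 : d ≤ c := mul_le_mul_of_nonneg_left (hFmono b a hb0 h) hμ0.le
      have h2 : b ^ 2 ≤ a ^ 2 := by nlinarith
      nlinarith
  set M : ℝ := max a b with hM
  have hM0 : (0:ℝ) ≤ M := le_trans ha0 (le_max_left a b)
  -- Step C : c + d ≥ μm * F M
  have hCD : μm * F M ≤ c + d := by
    rcases max_cases a b with ⟨hmax, _⟩ | ⟨hmax, _⟩ <;> rw [hM, hmax]
    · have h1 : μm * F a ≤ c := mul_le_mul_of_nonneg_right hμ1 (hFpos a ha0)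
      have h2 : 0 ≤ d := mul_nonneg hμ0.le (hFpos b hb0)
      linarith
    · have h1 : μm * F b ≤ d := mul_le_mul_of_nonneg_right hμ1 (hFpos b hb0)
      have h2 : 0 ≤ c := mul_nonneg hμ0.le (hFpos a ha0)
      linarith
  -- Step D : (δ^r + a^r + b^r)^((r-2)/r) ≤ 2^(2*((r-2)/r)) * F M
  set X : ℝ := (δ ^ r + a ^ r + b ^ r) ^ ((r - 2) / r) with hX
  have hbase0 : (0:ℝ) ≤ δ ^ r + a ^ r + b ^ r :=
    add_nonneg (add_nonneg (Real.rpow_nonneg hδ r) (Real.rpow_nonneg ha0 r))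
      (Real.rpow_nonneg hb0 r)
  have hX0 : (0:ℝ) ≤ X := Real.rpow_nonneg hbase0 _
  have hsum0 : (0:ℝ) ≤ δ ^ α + M ^ α :=
    add_nonneg (Real.rpow_nonneg hδ α) (Real.rpow_nonneg hM0 α)
  have hkey : ∀ s : ℝ, 0 ≤ s → s ^ r = (s ^ α) ^ (r / α) := by
    intro s hs
    rw [← Real.rpow_mul hs]
    congr 1
    field_simp
  have hD1 : δ ^ r + a ^ r + b ^ r ≤ 4 * (δ ^ α + M ^ α) ^ (r / α) := by
    have hra : (0:ℝ) ≤ r / α := div_nonneg hr0.le hα.le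
    have hδle : δ ^ r ≤ (δ ^ α + M ^ α) ^ (r / α) := by
      rw [hkey δ hδ]
      exact Real.rpow_le_rpow (Real.rpow_nonneg hδ α)
        (by have := Real.rpow_nonneg hM0 α; linarith) hra
    have hMα : ∀ s : ℝ, 0 ≤ s → s ≤ M → s ^ r ≤ (δ ^ α + M ^ α) ^ (r / α) := by
      intro s hs hsM
      rw [hkey s hs]
      refine Real.rpow_le_rpow (Real.rpow_nonneg hs α) ?_ hra
      have h1 : s ^ α ≤ M ^ α := Real.rpow_le_rpow hs hsM hα.le
      have h2 : (0:ℝ) ≤ δ ^ α := Real.rpow_nonneg hδ α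
      linarith
    have hale := hMα a ha0 (le_max_left a b)
    have hble := hMα b hb0 (le_max_right a b)
    have hpos : (0:ℝ) ≤ (δ ^ α + M ^ α) ^ (r / α) := Real.rpow_nonneg hsum0 _
    linarith
  have hD : X ≤ (2:ℝ) ^ (2 * ((r - 2) / r)) * F M := by
    have hq0 : (0:ℝ) ≤ (r - 2) / r := div_nonneg hr2 hr0.le
    have h1 : X ≤ (4 * (δ ^ α + M ^ α) ^ (r / α)) ^ ((r - 2) / r) :=
      Real.rpow_le_rpow hbase0 hD1 hq0
    have h2 : (4 * (δ ^ α + M ^ α) ^ (r / α)) ^ ((r - 2) / r) =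
        (4:ℝ) ^ ((r - 2) / r) * ((δ ^ α + M ^ α) ^ (r / α)) ^ ((r - 2) / r) :=
      Real.mul_rpow (by norm_num) (Real.rpow_nonneg hsum0 _)
    have h3 : ((δ ^ α + M ^ α) ^ (r / α)) ^ ((r - 2) / r) = F M := by
      rw [← Real.rpow_mul hsum0]
      have : r / α * ((r - 2) / r) = e := by
        rw [he]; field_simp
      rw [this]
    have h4 : (4:ℝ) ^ ((r - 2) / r) = (2:ℝ) ^ (2 * ((r - 2) / r)) := by
      rw [Real.rpow_mul (by norm_num : (0:ℝ) ≤ 2)]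
      norm_num
    rw [h2, h3, h4] at h1
    exact h1
  -- Step E : the constant is small enough
  set β : ℝ := min 0 (1 / α - 1 / r) with hβdef
  have hβ0 : β ≤ 0 := min_le_left _ _
  clear_value β X M c d F e b a
  have hE : μm / (r - 1) * (2:ℝ) ^ ((β - 1) * (r - 2) - 1) ≤
      μm / 2 * (2:ℝ) ^ (-(2 * ((r - 2) / r))) := by
    have h1 : μm / (r - 1) ≤ μm := div_le_self hμm.le (by linarith)
    have hexp : (β - 1) * (r - 2) - 1 ≤ -(2 * ((r - 2) / r)) - 1 := by
      have key : (β - 1) * (r - 2) ≤ -(2 * ((r - 2) / r)) := by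
        rw [← sub_nonneg]
        have h2 : (0:ℝ) ≤ (1 - β) * r - 2 := by
          have hb1 : (1:ℝ) ≤ 1 - β := by linarith
          have := mul_le_mul_of_nonneg_right hb1 hr0.le
          linarith
        have h3 : (0:ℝ) ≤ (r - 2) * ((1 - β) * r - 2) := mul_nonneg hr2 h2
        have heq : -(2 * ((r - 2) / r)) - (β - 1) * (r - 2) =
            (r - 2) * ((1 - β) * r - 2) / r := by field_simp; ring
        rw [heq]
        positivity
      linarith
    have h2 : (2:ℝ) ^ ((β - 1) * (r - 2) - 1) ≤ (2:ℝ) ^ (-(2 * ((r - 2) / r)) - 1) :=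
      Real.rpow_le_rpow_of_exponent_le one_le_two hexp
    have h3 : (2:ℝ) ^ (-(2 * ((r - 2) / r)) - 1) =
        (2:ℝ) ^ (-(2 * ((r - 2) / r))) * (2:ℝ)⁻¹ := by
      rw [sub_eq_add_neg, Real.rpow_add (by norm_num : (0:ℝ) < 2)]
      norm_num
    have hp1 : (0:ℝ) ≤ (2:ℝ) ^ ((β - 1) * (r - 2) - 1) := Real.rpow_nonneg (by norm_num) _
    calc μm / (r - 1) * (2:ℝ) ^ ((β - 1) * (r - 2) - 1)
        ≤ μm * (2:ℝ) ^ ((β - 1) * (r - 2) - 1) := mul_le_mul_of_nonneg_right h1 hp1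
      _ ≤ μm * ((2:ℝ) ^ (-(2 * ((r - 2) / r))) * (2:ℝ)⁻¹) := by
          rw [← h3]; exact mul_le_mul_of_nonneg_left h2 hμm.le
      _ = μm / 2 * (2:ℝ) ^ (-(2 * ((r - 2) / r))) := by ring
  -- Combine everything
  have hmain : μm / (r - 1) * (2:ℝ) ^ ((β - 1) * (r - 2) - 1) * X ≤ (c + d) / 2 := by
    have t0 : (0:ℝ) < (2:ℝ) ^ (2 * ((r - 2) / r)) := Real.rpow_pos_of_pos (by norm_num) _
    have hneg : (2:ℝ) ^ (-(2 * ((r - 2) / r))) = ((2:ℝ) ^ (2 * ((r - 2) / r)))⁻¹ :=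
      Real.rpow_neg (by norm_num) _
    have h5 : (2:ℝ) ^ (-(2 * ((r - 2) / r))) * X ≤ F M := by
      rw [hneg, inv_mul_le_iff₀ t0]
      calc X ≤ (2:ℝ) ^ (2 * ((r - 2) / r)) * F M := hD
        _ = (2:ℝ) ^ (2 * ((r - 2) / r)) * F M := rfl
    calc μm / (r - 1) * (2:ℝ) ^ ((β - 1) * (r - 2) - 1) * X
        ≤ μm / 2 * (2:ℝ) ^ (-(2 * ((r - 2) / r))) * X :=
          mul_le_mul_of_nonneg_right hE hX0
      _ = μm / 2 * ((2:ℝ) ^ (-(2 * ((r - 2) / r))) * X) := by ring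
      _ ≤ μm / 2 * F M := mul_le_mul_of_nonneg_left h5 (by positivity)
      _ ≤ (c + d) / 2 := by linarith
  rw [expand]
  have hfin : μm / (r - 1) * (2:ℝ) ^ ((β - 1) * (r - 2) - 1) * X * ‖τ - η‖ ^ 2 ≤
      (c + d) / 2 * ‖τ - η‖ ^ 2 :=
    mul_le_mul_of_nonneg_right hmain (sq_nonneg _)
  linarith
end

section
/- Let (Ω, μ) be a measure space, V a finite-dimensional real inner product space, r ≥ 2 and δ ≥ 0 real numbers, σ_m > 0, and let σ : Ω × V → V be a map such that for μ-a.e. x ∈ Ω and all τ, η ∈ V, ⟨σ(x,τ) − σ(x,η), τ − η⟩ ≥ σ_m (δ^r + ‖τ‖^r + ‖η‖^r)^{(r−2)/r} ‖τ − η‖². Let G, H : Ω → V be strongly measurable with finite L^r(μ) norms and such that x ↦ ⟨σ(x,G(x)) − σ(x,H(x)), G(x) − H(x)⟩ is measurable. Then ∫_Ω ⟨σ(x,G(x)) − σ(x,H(x)), G(x) − H(x)⟩ dμ(x) ≥ σ_m · 2^{(1−r)(r−2)/r} · ‖G − H‖_{L^r(μ)}^r (the left-hand integral being of a nonnegative integrand).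 -/
open MeasureTheory
open scoped RealInnerProductSpace

private lemma real_add_rpow_le {a b p : ℝ} (ha : 0 ≤ a) (hb : 0 ≤ b) (hp : 1 ≤ p) :
    (a + b) ^ p ≤ 2 ^ (p - 1) * (a ^ p + b ^ p) := by
  lift a to NNReal using ha
  lift b to NNReal using hb
  have h := NNReal.rpow_add_le_mul_rpow_add_rpow a b hp
  exact_mod_cast h

/-- Integrated strong monotonicity estimate for an a.e. strongly monotone
stress–strain law `σ : Ω × V → V`:
`∫ ⟨σ(x,G x) − σ(x,H x), G x − H x⟩ ≥ σ_m 2^{(1−r)(r−2)/r} ‖G − H‖_{L^r}^r`,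
the left-hand integral being the (Lebesgue) integral of a nonnegative integrand. -/
theorem integrated_strong_monotonicity
    {Ω : Type*} [MeasurableSpace Ω] (μ : Measure Ω)
    {V : Type*} [NormedAddCommGroup V] [InnerProductSpace ℝ V]
    [FiniteDimensional ℝ V]
    (r δ σm : ℝ) (hr : 2 ≤ r) (hδ : 0 ≤ δ) (hσm : 0 < σm)
    (σ : Ω → V → V)
    (hσ : ∀ᵐ x ∂μ, ∀ τ η : V,
      σm * (δ ^ r + ‖τ‖ ^ r + ‖η‖ ^ r) ^ ((r - 2) / r) * ‖τ - η‖ ^ 2 ≤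
        ⟪σ x τ - σ x η, τ - η⟫)
    (G H : Ω → V)
    (hG : StronglyMeasurable G) (hH : StronglyMeasurable H)
    (hGr : Integrable (fun x => ‖G x‖ ^ r) μ)
    (hHr : Integrable (fun x => ‖H x‖ ^ r) μ)
    (hmeas : Measurable (fun x => ⟪σ x (G x) - σ x (H x), G x - H x⟫)) :
    ENNReal.ofReal
        (σm * (2 : ℝ) ^ ((1 - r) * (r - 2) / r) *
          ((∫ x, ‖G x - H x‖ ^ r ∂μ) ^ (1 / r)) ^ r) ≤
      ∫⁻ x, ENNReal.ofReal ⟪σ x (G x) - σ x (H x), G x - H x⟫ ∂μ := by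
  have hr0 : (0:ℝ) < r := lt_of_lt_of_le two_pos hr
  set c : ℝ := σm * (2 : ℝ) ^ ((1 - r) * (r - 2) / r) with hc
  have hcpos : 0 < c := by positivity
  have hq : 0 ≤ (r - 2) / r := div_nonneg (by linarith) hr0.le
  -- pointwise bound on ‖g - h‖^r, valid everywhere
  have hbound : ∀ g h : V, ‖g - h‖ ^ r ≤ 2 ^ (r - 1) * (δ ^ r + ‖g‖ ^ r + ‖h‖ ^ r) := by
    intro g h
    have h1 : ‖g - h‖ ^ r ≤ (‖g‖ + ‖h‖) ^ r :=
      Real.rpow_le_rpow (norm_nonneg _) (norm_sub_le g h) hr0.le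
    have h2 : (‖g‖ + ‖h‖) ^ r ≤ 2 ^ (r - 1) * (‖g‖ ^ r + ‖h‖ ^ r) :=
      real_add_rpow_le (norm_nonneg _) (norm_nonneg _) (by linarith)
    have h3 : (2:ℝ) ^ (r - 1) * (‖g‖ ^ r + ‖h‖ ^ r) ≤
        2 ^ (r - 1) * (δ ^ r + ‖g‖ ^ r + ‖h‖ ^ r) := by
      have hδr : 0 ≤ δ ^ r := Real.rpow_nonneg hδ r
      have h2p : (0:ℝ) ≤ 2 ^ (r - 1) := (Real.rpow_pos_of_pos two_pos _).le
      nlinarith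
    linarith
  -- a.e. pointwise key estimate
  have key : ∀ᵐ x ∂μ, c * ‖G x - H x‖ ^ r ≤ ⟪σ x (G x) - σ x (H x), G x - H x⟫ := by
    filter_upwards [hσ] with x hx
    have h1 := hx (G x) (H x)
    set g := G x
    set h := H x
    set t := ‖g - h‖ with htdef
    set S : ℝ := δ ^ r + ‖g‖ ^ r + ‖h‖ ^ r with hS
    have hS0 : 0 ≤ S := by
      have := Real.rpow_nonneg hδ r
      have := Real.rpow_nonneg (norm_nonneg g) r
      have := Real.rpow_nonneg (norm_nonneg h) r
      simp only [hS]; linarith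
    have ht0 : 0 ≤ t := norm_nonneg _
    -- t ^ (r-2) ≤ 2 ^ ((r-1)*((r-2)/r)) * S ^ ((r-2)/r)
    have h2 : t ^ (r - 2) ≤ 2 ^ ((r - 1) * ((r - 2) / r)) * S ^ ((r - 2) / r) := by
      have h0 : t ^ (r - 2) = (t ^ r) ^ ((r - 2) / r) := by
        rw [← Real.rpow_mul ht0]
        congr 1
        field_simp
      rw [h0, Real.rpow_mul (by norm_num : (0:ℝ) ≤ 2)]
      calc (t ^ r) ^ ((r - 2) / r)
          ≤ (2 ^ (r - 1) * S) ^ ((r - 2) / r) :=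
            Real.rpow_le_rpow (Real.rpow_nonneg ht0 r) (hbound g h) hq
        _ = (2 ^ (r - 1)) ^ ((r - 2) / r) * S ^ ((r - 2) / r) :=
            Real.mul_rpow (Real.rpow_pos_of_pos two_pos _).le hS0
    -- t ^ r = t ^ (r-2) * t ^ 2
    have h3 : t ^ r = t ^ (r - 2) * t ^ 2 := by
      have hne : r - 2 + 2 ≠ 0 := by intro h0; nlinarith
      have := Real.rpow_add' (y := r - 2) (z := 2) ht0 hne
      calc t ^ r = t ^ (r - 2 + 2) := by norm_num
        _ = t ^ (r - 2) * t ^ (2:ℝ) := this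
        _ = t ^ (r - 2) * t ^ (2:ℕ) := by
            rw [show ((2:ℝ) = ((2:ℕ):ℝ)) by norm_num, Real.rpow_natCast]
    have hexp : (2:ℝ) ^ ((1 - r) * (r - 2) / r) * (2 ^ ((r - 1) * ((r - 2) / r)) *
        S ^ ((r - 2) / r)) = S ^ ((r - 2) / r) := by
      rw [← mul_assoc, ← Real.rpow_add two_pos,
        show (1 - r) * (r - 2) / r + (r - 1) * ((r - 2) / r) = 0 by ring, Real.rpow_zero,
        one_mul]
    calc c * t ^ r
        = σm * ((2:ℝ) ^ ((1 - r) * (r - 2) / r) * t ^ (r - 2)) * t ^ 2 := by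
          rw [h3, hc]; ring
      _ ≤ σm * ((2:ℝ) ^ ((1 - r) * (r - 2) / r) *
            (2 ^ ((r - 1) * ((r - 2) / r)) * S ^ ((r - 2) / r))) * t ^ 2 := by
          apply mul_le_mul_of_nonneg_right _ (sq_nonneg t)
          apply mul_le_mul_of_nonneg_left _ hσm.le
          exact mul_le_mul_of_nonneg_left h2 (Real.rpow_pos_of_pos two_pos _).le
      _ = σm * S ^ ((r - 2) / r) * t ^ 2 := by rw [hexp]
      _ ≤ ⟪σ x g - σ x h, g - h⟫ := h1
  -- integrability of ‖G - H‖^r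
  have hmeasGH : AEStronglyMeasurable (fun x => ‖G x - H x‖ ^ r) μ := by
    have hcont : Continuous fun t : ℝ => t ^ r :=
      continuous_id.rpow_const fun x => Or.inr hr0.le
    exact (hcont.comp_stronglyMeasurable (hG.sub hH).norm).aestronglyMeasurable
  have hGHr : Integrable (fun x => ‖G x - H x‖ ^ r) μ := by
    refine Integrable.mono' ((hGr.const_mul ((2:ℝ) ^ (r - 1))).add
      (hHr.const_mul ((2:ℝ) ^ (r - 1)))) hmeasGH ?_
    filter_upwards with x
    rw [Real.norm_of_nonneg (Real.rpow_nonneg (norm_nonneg _) r)]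
    have h1 : ‖G x - H x‖ ^ r ≤ (‖G x‖ + ‖H x‖) ^ r :=
      Real.rpow_le_rpow (norm_nonneg _) (norm_sub_le _ _) hr0.le
    have h2 : (‖G x‖ + ‖H x‖) ^ r ≤ 2 ^ (r - 1) * (‖G x‖ ^ r + ‖H x‖ ^ r) :=
      real_add_rpow_le (norm_nonneg _) (norm_nonneg _) (by linarith)
    calc ‖G x - H x‖ ^ r ≤ 2 ^ (r - 1) * (‖G x‖ ^ r + ‖H x‖ ^ r) := le_trans h1 h2
      _ = 2 ^ (r - 1) * ‖G x‖ ^ r + 2 ^ (r - 1) * ‖H x‖ ^ r := by ring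
  have hnn : 0 ≤ᵐ[μ] fun x => ‖G x - H x‖ ^ r :=
    Filter.Eventually.of_forall fun x => Real.rpow_nonneg (norm_nonneg _) r
  have hI : ENNReal.ofReal (∫ x, ‖G x - H x‖ ^ r ∂μ) =
      ∫⁻ x, ENNReal.ofReal (‖G x - H x‖ ^ r) ∂μ :=
    MeasureTheory.ofReal_integral_eq_lintegral_ofReal hGHr hnn
  have hIr : ((∫ x, ‖G x - H x‖ ^ r ∂μ) ^ (1 / r)) ^ r = ∫ x, ‖G x - H x‖ ^ r ∂μ := by
    rw [one_div, Real.rpow_inv_rpow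
      (integral_nonneg fun x => Real.rpow_nonneg (norm_nonneg _) r) hr0.ne']
  rw [hIr,
    ENNReal.ofReal_mul hcpos.le, hI, ← lintegral_const_mul' _ _ ENNReal.ofReal_ne_top]
  refine lintegral_mono_ae ?_
  filter_upwards [key] with x hx
  rw [← ENNReal.ofReal_mul hcpos.le]
  exact ENNReal.ofReal_le_ofReal hx
end

section
/- Let I be a finite set, h : I → ℝ with h_E > 0 for all E ∈ I, d : I → ℝ with d_E ≥ 0 for all E ∈ I, and let r ≥ 2 and δ ≥ 0 be real numbers. Then Σ_{E∈I} (δ^r + h_E^{−r} d_E^r)^{(r−2)/r} d_E² ≤ ( Σ_{E∈I} h_E² δ^r + Σ_{E∈I} h_E^{2−r} d_E^r )^{(r−2)/r} · ( Σ_{E∈I} h_E^{2−r} d_E^r )^{2/r}. -/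
/-- Discrete Hölder inequality with exponents `(r/(r−2), r/2)` comparing the
stabilization-based error measure with the discrete norm (core of Lemma 3.3):
`Σ_E (δ^r + h_E^{−r} d_E^r)^{(r−2)/r} d_E² ≤
 (Σ_E h_E² δ^r + Σ_E h_E^{2−r} d_E^r)^{(r−2)/r} (Σ_E h_E^{2−r} d_E^r)^{2/r}`. -/
theorem discrete_error_measure_comparison
    {ι : Type*} [Fintype ι]
    (h d : ι → ℝ) (hh : ∀ E, 0 < h E) (hd : ∀ E, 0 ≤ d E)
    (r δ : ℝ) (hr : 2 ≤ r) (hδ : 0 ≤ δ) :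
    ∑ E, (δ ^ r + h E ^ (-r) * d E ^ r) ^ ((r - 2) / r) * d E ^ 2 ≤
      ((∑ E, h E ^ 2 * δ ^ r) + ∑ E, h E ^ (2 - r) * d E ^ r) ^ ((r - 2) / r) *
        (∑ E, h E ^ (2 - r) * d E ^ r) ^ (2 / r) := by
  have hr0 : (0:ℝ) < r := lt_of_lt_of_le two_pos hr
  set a : ι → ℝ := fun E => h E ^ 2 * δ ^ r + h E ^ (2 - r) * d E ^ r with ha
  set b : ι → ℝ := fun E => h E ^ (2 - r) * d E ^ r with hb
  have hbnn : ∀ E, 0 ≤ b E := fun E =>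
    mul_nonneg (Real.rpow_nonneg (hh E).le _) (Real.rpow_nonneg (hd E) _)
  have hann : ∀ E, 0 ≤ a E := fun E =>
    add_nonneg (mul_nonneg (pow_nonneg (hh E).le 2) (Real.rpow_nonneg hδ _)) (hbnn E)
  -- rewrite each LHS term as a^((r-2)/r) * b^(2/r)
  have key : ∀ E, (δ ^ r + h E ^ (-r) * d E ^ r) ^ ((r - 2) / r) * d E ^ 2
      = a E ^ ((r - 2) / r) * b E ^ (2 / r) := by
    intro E
    have hhE := hh E
    have hcnn : (0:ℝ) ≤ δ ^ r + h E ^ (-r) * d E ^ r :=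
      add_nonneg (Real.rpow_nonneg hδ _)
        (mul_nonneg (Real.rpow_nonneg hhE.le _) (Real.rpow_nonneg (hd E) _))
    have haE : a E = h E ^ 2 * (δ ^ r + h E ^ (-r) * d E ^ r) := by
      have : h E ^ (2 - r) = h E ^ 2 * h E ^ (-r) := by
        rw [← Real.rpow_natCast (h E) 2, ← Real.rpow_add hhE]
        norm_num [sub_eq_add_neg]
      simp [ha, this, mul_assoc, mul_add]
    have hbE : b E ^ (2 / r) = h E ^ ((2 - r) * (2 / r)) * d E ^ 2 := by
      rw [hb]
      rw [Real.mul_rpow (Real.rpow_nonneg hhE.le _) (Real.rpow_nonneg (hd E) _),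
        ← Real.rpow_natCast (d E) 2, ← Real.rpow_mul (hd E), ← Real.rpow_mul hhE.le]
      congr 1
      field_simp
      norm_num
    rw [haE, hbE, Real.mul_rpow (pow_nonneg hhE.le 2) hcnn,
      ← Real.rpow_natCast (h E) 2, ← Real.rpow_mul hhE.le]
    have : h E ^ ((2:ℕ) * ((r - 2) / r)) * (δ ^ r + h E ^ (-r) * d E ^ r) ^ ((r - 2) / r) *
        (h E ^ ((2 - r) * (2 / r)) * d E ^ 2)
        = (h E ^ ((2:ℕ) * ((r - 2) / r)) * h E ^ ((2 - r) * (2 / r))) *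
          ((δ ^ r + h E ^ (-r) * d E ^ r) ^ ((r - 2) / r) * d E ^ 2) := by ring
    rw [this, ← Real.rpow_add hhE]
    have he : (2:ℕ) * ((r - 2) / r) + (2 - r) * (2 / r) = 0 := by
      push_cast; field_simp; ring
    rw [he, Real.rpow_zero, one_mul]
  rw [Finset.sum_congr rfl (fun E _ => key E)]
  rcases eq_or_lt_of_le hr with hr2 | hr2
  · subst hr2
    simp [Real.rpow_zero]
  · -- r > 2 : Hölder with conjugate exponents r/(r-2) and r/2
    have hne1 : r ≠ 0 := hr0.ne'
    have hne2 : r - 2 ≠ 0 := by linarith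
    have hpq : Real.HolderConjugate (r / (r - 2)) (r / 2) := by
      constructor
      · rw [inv_div, inv_div, inv_one, ← add_div, sub_add_cancel, div_self hne1]
      · exact div_pos hr0 (by linarith)
      · exact div_pos hr0 two_pos
    have H := Real.inner_le_Lp_mul_Lq_of_nonneg (s := Finset.univ)
      (f := fun E => a E ^ ((r - 2) / r)) (g := fun E => b E ^ (2 / r)) hpq
      (fun E _ => Real.rpow_nonneg (hann E) _) (fun E _ => Real.rpow_nonneg (hbnn E) _)
    have e1 : ∀ E, (a E ^ ((r - 2) / r)) ^ (r / (r - 2)) = a E := by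
      intro E
      rw [← Real.rpow_mul (hann E)]
      have : (r - 2) / r * (r / (r - 2)) = 1 := by field_simp
      rw [this, Real.rpow_one]
    have e2 : ∀ E, (b E ^ (2 / r)) ^ (r / 2) = b E := by
      intro E
      rw [← Real.rpow_mul (hbnn E)]
      have : 2 / r * (r / 2) = 1 := by field_simp
      rw [this, Real.rpow_one]
    simp only [e1, e2, one_div_div] at H
    calc ∑ E, a E ^ ((r - 2) / r) * b E ^ (2 / r)
        ≤ (∑ E, a E) ^ ((r - 2) / r) * (∑ E, b E) ^ (2 / r) := H
      _ = _ := by rw [ha, hb, Finset.sum_add_distrib]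
end

section
/- Let V be a real inner product space, r ≥ 2 and α > 0 real numbers. There exists a constant C > 0 depending only on r and α such that for all δ ≥ 0, all h > 0, all μ̄ > 0 and all x, y, v ∈ V, defining S(x, v) = μ̄ (δ^α + h^{−α}‖x‖^α)^{(r−2)/α} ⟨x, v⟩, one has |S(x, v) − S(y, v)| ≤ C μ̄ (δ^r + h^{−r}‖x‖^r + h^{−r}‖y‖^r)^{(r−2)/r} ‖x − y‖ ‖v‖. -/
open scoped RealInnerProductSpace
open Real

/-- `A^p - B^p ≤ max p 1 * A^(p-1) * (A - B)` for `0 ≤ B ≤ A` and `0 ≤ p`. -/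
lemma aux_rpow_sub_rpow_le {p A B : ℝ} (hp : 0 ≤ p) (hB : 0 ≤ B) (hBA : B ≤ A) :
    A ^ p - B ^ p ≤ max p 1 * A ^ (p - 1) * (A - B) := by
  rcases eq_or_lt_of_le (hB.trans hBA) with hA | hA
  · obtain rfl : A = 0 := hA.symm
    obtain rfl : B = 0 := le_antisymm hBA hB
    simp
  have hAp : A ^ (p - 1) * A = A ^ p := by
    rw [← rpow_add_one hA.ne']; ring_nf
  rcases le_or_gt 1 p with hp1 | hp1
  · -- Bernoulli case
    have hs : -1 ≤ B / A - 1 := by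
      have : 0 ≤ B / A := div_nonneg hB hA.le
      linarith
    have hbern := one_add_mul_self_le_rpow_one_add hs hp1
    have h1 : (1 : ℝ) + (B / A - 1) = B / A := by ring
    rw [h1, div_rpow hB hA.le] at hbern
    have hApos : 0 < A ^ p := rpow_pos_of_pos hA p
    -- multiply Bernoulli by A^p
    have h2 : A ^ p * (1 + p * (B / A - 1)) ≤ B ^ p := by
      calc A ^ p * (1 + p * (B / A - 1)) ≤ A ^ p * (B ^ p / A ^ p) :=
            mul_le_mul_of_nonneg_left hbern hApos.le
        _ = B ^ p := by rw [mul_comm, div_mul_cancel₀ _ hApos.ne']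
    have h3 : A ^ p * (B / A) = A ^ (p - 1) * B := by
      rw [rpow_sub_one hA.ne']; ring
    have h4 : A ^ p - B ^ p ≤ p * A ^ (p - 1) * (A - B) := by nlinarith [h2, h3, hAp]
    have h5 : 0 ≤ A ^ (p - 1) * (A - B) :=
      mul_nonneg (rpow_nonneg hA.le _) (by linarith)
    calc A ^ p - B ^ p ≤ p * A ^ (p - 1) * (A - B) := h4
      _ ≤ max p 1 * A ^ (p - 1) * (A - B) := by
          have := le_max_left p 1
          nlinarith [h5]
  · -- concave case : p < 1
    have hmax : max p 1 = 1 := max_eq_right hp1.le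
    have hkey : A ^ (p - 1) * B ≤ B ^ p := by
      rcases eq_or_lt_of_le hB with hB0 | hB0
      · rw [← hB0, mul_zero]
        exact rpow_nonneg (by linarith : (0:ℝ) ≤ 0) p
      · have h6 : A ^ (p - 1) ≤ B ^ (p - 1) :=
          rpow_le_rpow_of_nonpos hB0 hBA (by linarith)
        have h7 : B ^ (p - 1) * B = B ^ p := by
          rw [← rpow_add_one hB0.ne']; ring_nf
        calc A ^ (p - 1) * B ≤ B ^ (p - 1) * B :=
              mul_le_mul_of_nonneg_right h6 hB
          _ = B ^ p := h7
    rw [hmax, one_mul]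
    nlinarith [hkey, hAp]

/-- `m^(r-2) ≤ (δ^r + a^r + b^r)^((r-2)/r)` where `m = max δ (max a b)`. -/
lemma aux_max_rpow_le {r δ a b : ℝ} (hr : 2 ≤ r) (hδ : 0 ≤ δ) (ha : 0 ≤ a) (hb : 0 ≤ b) :
    max δ (max a b) ^ (r - 2) ≤ (δ ^ r + a ^ r + b ^ r) ^ ((r - 2) / r) := by
  set m := max δ (max a b) with hm_def
  have hm : 0 ≤ m := le_trans hδ (le_max_left _ _)
  have hr0 : 0 < r := by linarith
  have hδr : (0:ℝ) ≤ δ ^ r := rpow_nonneg hδ r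
  have har : (0:ℝ) ≤ a ^ r := rpow_nonneg ha r
  have hbr : (0:ℝ) ≤ b ^ r := rpow_nonneg hb r
  have hmr : m ^ r ≤ δ ^ r + a ^ r + b ^ r := by
    rcases max_cases δ (max a b) with ⟨h1, _⟩ | ⟨h1, _⟩
    · rw [hm_def, h1]; linarith
    · rcases max_cases a b with ⟨h2, _⟩ | ⟨h2, _⟩
      · rw [hm_def, h1, h2]; linarith
      · rw [hm_def, h1, h2]; linarith
  calc m ^ (r - 2) = (m ^ r) ^ ((r - 2) / r) := by
        rw [← rpow_mul hm, mul_div_cancel₀ _ hr0.ne']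
    _ ≤ (δ ^ r + a ^ r + b ^ r) ^ ((r - 2) / r) :=
        rpow_le_rpow (rpow_nonneg hm r) hmr (div_nonneg (by linarith) hr0.le)

/-- `(δ^α + a^α)^p ≤ 2^p * (max δ a)^(α*p)`. -/
lemma aux_A_le {α p δ a : ℝ} (hα : 0 < α) (hp : 0 ≤ p) (hδ : 0 ≤ δ) (ha : 0 ≤ a) :
    (δ ^ α + a ^ α) ^ p ≤ 2 ^ p * (max δ a) ^ (α * p) := by
  have hm : 0 ≤ max δ a := le_trans hδ (le_max_left _ _)
  have h1 : δ ^ α + a ^ α ≤ 2 * (max δ a) ^ α := by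
    have h2 : δ ^ α ≤ (max δ a) ^ α := rpow_le_rpow hδ (le_max_left _ _) hα.le
    have h3 : a ^ α ≤ (max δ a) ^ α := rpow_le_rpow ha (le_max_right _ _) hα.le
    linarith
  calc (δ ^ α + a ^ α) ^ p ≤ (2 * (max δ a) ^ α) ^ p :=
        rpow_le_rpow (add_nonneg (rpow_nonneg hδ α) (rpow_nonneg ha α)) h1 hp
    _ = 2 ^ p * (max δ a) ^ (α * p) := by
        rw [mul_rpow (by norm_num) (rpow_nonneg hm α), ← rpow_mul hm]

/-- Core one-sided estimate, assuming `b ≤ a` and `c ≤ a`. -/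
lemma aux_core {p α δ a b c : ℝ} (hp : 0 ≤ p) (hα : 0 < α) (hδ : 0 ≤ δ) (hb : 0 ≤ b)
    (hba : b ≤ a) (hc : 0 ≤ c) (hca : c ≤ a) :
    ((δ ^ α + a ^ α) ^ p - (δ ^ α + b ^ α) ^ p) * c ≤
      (max p 1 * max α 1 * 2 ^ p) * (max δ a) ^ (α * p) * (a - b) := by
  have ha : 0 ≤ a := hb.trans hba
  rcases eq_or_lt_of_le ha with ha0 | ha0
  · obtain rfl : a = 0 := ha0.symm
    obtain rfl : b = 0 := le_antisymm hba hb
    obtain rfl : c = 0 := le_antisymm hca hc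
    simp
  set A := δ ^ α + a ^ α with hA_def
  set B := δ ^ α + b ^ α with hB_def
  have hB : 0 ≤ B := add_nonneg (rpow_nonneg hδ α) (rpow_nonneg hb α)
  have hBA : B ≤ A := add_le_add_right (rpow_le_rpow hb hba hα.le) _
  have hm : 0 < max δ a := lt_of_lt_of_le ha0 (le_max_right _ _)
  have haa : a ^ (α - 1) * a = a ^ α := by
    rw [← rpow_add_one ha0.ne']; ring_nf
  have step1 : A ^ p - B ^ p ≤ max p 1 * A ^ (p - 1) * (A - B) :=
    aux_rpow_sub_rpow_le hp hB hBA
  have step2 : A - B = a ^ α - b ^ α := by rw [hA_def, hB_def]; ring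
  have step3 : a ^ α - b ^ α ≤ max α 1 * a ^ (α - 1) * (a - b) :=
    aux_rpow_sub_rpow_le hα.le hb hba
  have hkey : A ^ (p - 1) * a ^ α ≤ 2 ^ p * (max δ a) ^ (α * p) := by
    rcases le_or_gt 1 p with hp1 | hp1
    · have hA2 : A ≤ 2 * (max δ a) ^ α := by
        have h2 : δ ^ α ≤ (max δ a) ^ α := rpow_le_rpow hδ (le_max_left _ _) hα.le
        have h3 : a ^ α ≤ (max δ a) ^ α := rpow_le_rpow ha (le_max_right _ _) hα.le
        rw [hA_def]; linarith
      have hA0 : 0 ≤ A := add_nonneg (rpow_nonneg hδ α) (rpow_nonneg ha α)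
      have h4 : A ^ (p - 1) ≤ (2 * (max δ a) ^ α) ^ (p - 1) :=
        rpow_le_rpow hA0 hA2 (by linarith)
      have h5 : (2 * (max δ a) ^ α) ^ (p - 1) = 2 ^ (p - 1) * (max δ a) ^ (α * (p - 1)) := by
        rw [mul_rpow (by norm_num) (rpow_nonneg hm.le α), ← rpow_mul hm.le]
      have h6 : a ^ α ≤ (max δ a) ^ α := rpow_le_rpow ha (le_max_right _ _) hα.le
      have h7 : (max δ a) ^ (α * (p - 1)) * (max δ a) ^ α = (max δ a) ^ (α * p) := by
        rw [← rpow_add hm]; ring_nf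
      have h8 : (2:ℝ) ^ (p - 1) ≤ 2 ^ p :=
        rpow_le_rpow_of_exponent_le one_le_two (by linarith)
      calc A ^ (p - 1) * a ^ α ≤ (2 ^ (p - 1) * (max δ a) ^ (α * (p - 1))) * (max δ a) ^ α := by
            rw [← h5]
            exact mul_le_mul h4 h6 (rpow_nonneg ha α) (rpow_nonneg (by positivity) _)
        _ = 2 ^ (p - 1) * (max δ a) ^ (α * p) := by rw [mul_assoc, h7]
        _ ≤ 2 ^ p * (max δ a) ^ (α * p) :=
            mul_le_mul_of_nonneg_right h8 (rpow_nonneg hm.le _)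
    · have haα : 0 < a ^ α := rpow_pos_of_pos ha0 α
      have h4 : a ^ α ≤ A := by
        have := rpow_nonneg hδ α
        rw [hA_def]; linarith
      have h5 : A ^ (p - 1) ≤ (a ^ α) ^ (p - 1) :=
        rpow_le_rpow_of_nonpos haα h4 (by linarith)
      have h6 : (a ^ α) ^ (p - 1) * a ^ α = a ^ (α * p) := by
        rw [← rpow_mul ha, ← rpow_add ha0]; ring_nf
      have h7 : a ^ (α * p) ≤ (max δ a) ^ (α * p) :=
        rpow_le_rpow ha (le_max_right _ _) (by positivity)
      have h8 : (1:ℝ) ≤ 2 ^ p := by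
        rw [show (1:ℝ) = 2 ^ (0:ℝ) by simp]
        exact rpow_le_rpow_of_exponent_le one_le_two hp
      calc A ^ (p - 1) * a ^ α ≤ (a ^ α) ^ (p - 1) * a ^ α :=
            mul_le_mul_of_nonneg_right h5 haα.le
        _ = a ^ (α * p) := h6
        _ ≤ (max δ a) ^ (α * p) := h7
        _ ≤ 2 ^ p * (max δ a) ^ (α * p) := by nlinarith [rpow_nonneg hm.le (α * p)]
  have hApm : 0 ≤ A ^ (p - 1) := rpow_nonneg (add_nonneg (rpow_nonneg hδ α) (rpow_nonneg ha α)) _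
  calc (A ^ p - B ^ p) * c ≤ (max p 1 * A ^ (p - 1) * (A - B)) * c :=
        mul_le_mul_of_nonneg_right step1 hc
    _ = max p 1 * A ^ (p - 1) * (a ^ α - b ^ α) * c := by rw [step2]
    _ ≤ max p 1 * A ^ (p - 1) * (max α 1 * a ^ (α - 1) * (a - b)) * c := by
        have h9 : 0 ≤ max p 1 * A ^ (p - 1) := by positivity
        exact mul_le_mul_of_nonneg_right (mul_le_mul_of_nonneg_left step3 h9) hc
    _ ≤ max p 1 * A ^ (p - 1) * (max α 1 * a ^ (α - 1) * (a - b)) * a := by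
        have h10 : 0 ≤ max p 1 * A ^ (p - 1) * (max α 1 * a ^ (α - 1) * (a - b)) := by
          have := rpow_nonneg ha (α - 1)
          have hab : (0:ℝ) ≤ a - b := by linarith
          positivity
        exact mul_le_mul_of_nonneg_left hca h10
    _ = max p 1 * max α 1 * (A ^ (p - 1) * (a ^ (α - 1) * a)) * (a - b) := by ring
    _ = max p 1 * max α 1 * (A ^ (p - 1) * a ^ α) * (a - b) := by rw [haa]
    _ ≤ max p 1 * max α 1 * (2 ^ p * (max δ a) ^ (α * p)) * (a - b) := by
        have h11 : 0 ≤ max p 1 * max α 1 := by positivity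
        exact mul_le_mul_of_nonneg_right
          (mul_le_mul_of_nonneg_left hkey h11) (by linarith)
    _ = (max p 1 * max α 1 * 2 ^ p) * (max δ a) ^ (α * p) * (a - b) := by ring

/-- Symmetric scalar estimate. -/
lemma aux_scalar {p α δ a b : ℝ} (hp : 0 ≤ p) (hα : 0 < α) (hδ : 0 ≤ δ)
    (ha : 0 ≤ a) (hb : 0 ≤ b) :
    |(δ ^ α + a ^ α) ^ p - (δ ^ α + b ^ α) ^ p| * b ≤
      (max p 1 * max α 1 * 2 ^ p) * (max δ (max a b)) ^ (α * p) * |a - b| := by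
  rcases le_total b a with hle | hle
  · have h1 : (δ ^ α + b ^ α) ^ p ≤ (δ ^ α + a ^ α) ^ p :=
      rpow_le_rpow (add_nonneg (rpow_nonneg hδ α) (rpow_nonneg hb α))
        (add_le_add_right (rpow_le_rpow hb hle hα.le) _) hp
    rw [abs_of_nonneg (sub_nonneg.2 h1), abs_of_nonneg (sub_nonneg.2 hle),
      max_eq_left hle]
    exact aux_core hp hα hδ hb hle hb hle
  · have h1 : (δ ^ α + a ^ α) ^ p ≤ (δ ^ α + b ^ α) ^ p :=
      rpow_le_rpow (add_nonneg (rpow_nonneg hδ α) (rpow_nonneg ha α))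
        (add_le_add_right (rpow_le_rpow ha hle hα.le) _) hp
    rw [abs_sub_comm, abs_of_nonneg (sub_nonneg.2 h1), abs_sub_comm a b,
      abs_of_nonneg (sub_nonneg.2 hle), max_eq_right hle]
    exact aux_core hp hα hδ ha hle hb (le_refl b)

/-- Hölder continuity (3.7) of the nonlinear dofi-dofi stabilization
`S(x, v) = μ̄ (δ^α + h^{−α}‖x‖^α)^{(r−2)/α} ⟨x, v⟩`, with a constant
depending only on `r` and `α`. -/
theorem stabilization_holder_continuity
    {V : Type*} [NormedAddCommGroup V] [InnerProductSpace ℝ V]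
    (r α : ℝ) (hr : 2 ≤ r) (hα : 0 < α) :
    ∃ C : ℝ, 0 < C ∧
      ∀ (δ h μ : ℝ), 0 ≤ δ → 0 < h → 0 < μ →
        ∀ x y v : V,
          |μ * (δ ^ α + h ^ (-α) * ‖x‖ ^ α) ^ ((r - 2) / α) * ⟪x, v⟫ -
              μ * (δ ^ α + h ^ (-α) * ‖y‖ ^ α) ^ ((r - 2) / α) * ⟪y, v⟫| ≤
            C * μ * (δ ^ r + h ^ (-r) * ‖x‖ ^ r + h ^ (-r) * ‖y‖ ^ r) ^ ((r - 2) / r) *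
              ‖x - y‖ * ‖v‖ := by
  set p := (r - 2) / α with hp_def
  have hp : 0 ≤ p := div_nonneg (by linarith) hα.le
  refine ⟨2 ^ p + max p 1 * max α 1 * 2 ^ p, by positivity, ?_⟩
  intro δ h μ hδ hh hμ x y v
  set a := ‖x‖ / h with ha_def
  set b := ‖y‖ / h with hb_def
  have ha : 0 ≤ a := div_nonneg (norm_nonneg x) hh.le
  have hb : 0 ≤ b := div_nonneg (norm_nonneg y) hh.le
  have hconv : ∀ (s : ℝ) (w : V), h ^ (-s) * ‖w‖ ^ s = (‖w‖ / h) ^ s := by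
    intro s w
    rw [div_rpow (norm_nonneg w) hh.le, rpow_neg hh.le]
    ring
  rw [hconv α x, hconv α y, hconv r x, hconv r y, ← ha_def, ← hb_def]
  set A := δ ^ α + a ^ α with hA_def
  set B := δ ^ α + b ^ α with hB_def
  set Sg := δ ^ r + a ^ r + b ^ r with hSg_def
  have hA0 : 0 ≤ A := add_nonneg (rpow_nonneg hδ α) (rpow_nonneg ha α)
  have hSq : 0 ≤ Sg ^ ((r - 2) / r) :=
    rpow_nonneg (by positivity : (0:ℝ) ≤ δ ^ r + a ^ r + b ^ r) _
  -- the two max-bounds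
  have hM1 : (max δ a) ^ (α * p) ≤ Sg ^ ((r - 2) / r) := by
    have hαp : α * p = r - 2 := by
      rw [hp_def]; field_simp
    rw [hαp]
    calc (max δ a) ^ (r - 2) ≤ (max δ (max a b)) ^ (r - 2) := by
          apply rpow_le_rpow (le_trans hδ (le_max_left _ _))
            (max_le_max (le_refl δ) (le_max_left a b)) (by linarith)
      _ ≤ Sg ^ ((r - 2) / r) := aux_max_rpow_le hr hδ ha hb
  have hM2 : (max δ (max a b)) ^ (α * p) ≤ Sg ^ ((r - 2) / r) := by
    have hαp : α * p = r - 2 := by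
      rw [hp_def]; field_simp
    rw [hαp]
    exact aux_max_rpow_le hr hδ ha hb
  -- split
  have hsplit : μ * A ^ p * ⟪x, v⟫ - μ * B ^ p * ⟪y, v⟫ =
      μ * A ^ p * ⟪x - y, v⟫ + μ * (A ^ p - B ^ p) * ⟪y, v⟫ := by
    rw [inner_sub_left]; ring
  have hT1 : μ * A ^ p * |⟪x - y, v⟫| ≤ 2 ^ p * μ * Sg ^ ((r - 2) / r) * ‖x - y‖ * ‖v‖ := by
    calc μ * A ^ p * |⟪x - y, v⟫| ≤ μ * A ^ p * (‖x - y‖ * ‖v‖) := by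
          have : 0 ≤ μ * A ^ p := mul_nonneg hμ.le (rpow_nonneg hA0 p)
          exact mul_le_mul_of_nonneg_left (abs_real_inner_le_norm _ _) this
      _ ≤ μ * (2 ^ p * (max δ a) ^ (α * p)) * (‖x - y‖ * ‖v‖) := by
          have h1 : A ^ p ≤ 2 ^ p * (max δ a) ^ (α * p) := aux_A_le hα hp hδ ha
          have h2 : 0 ≤ ‖x - y‖ * ‖v‖ := by positivity
          exact mul_le_mul_of_nonneg_right
            (mul_le_mul_of_nonneg_left h1 hμ.le) h2
      _ ≤ μ * (2 ^ p * Sg ^ ((r - 2) / r)) * (‖x - y‖ * ‖v‖) := by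
          have h2 : 0 ≤ ‖x - y‖ * ‖v‖ := by positivity
          have h3 : (2:ℝ) ^ p * (max δ a) ^ (α * p) ≤ 2 ^ p * Sg ^ ((r - 2) / r) :=
            mul_le_mul_of_nonneg_left hM1 (by positivity)
          exact mul_le_mul_of_nonneg_right (mul_le_mul_of_nonneg_left h3 hμ.le) h2
      _ = 2 ^ p * μ * Sg ^ ((r - 2) / r) * ‖x - y‖ * ‖v‖ := by ring
  have hyb : ‖y‖ = b * h := by
    rw [hb_def]; field_simp
  have habh : |a - b| * h ≤ ‖x - y‖ := by
    have h1 : |a - b| = |‖x‖ - ‖y‖| / h := by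
      rw [ha_def, hb_def, div_sub_div_same, abs_div, abs_of_pos hh]
    rw [h1, div_mul_cancel₀ _ hh.ne']
    exact abs_norm_sub_norm_le x y
  have hC0 : (0:ℝ) ≤ max p 1 * max α 1 * 2 ^ p := by positivity
  have hT2 : μ * |A ^ p - B ^ p| * |⟪y, v⟫| ≤
      (max p 1 * max α 1 * 2 ^ p) * μ * Sg ^ ((r - 2) / r) * ‖x - y‖ * ‖v‖ := by
    calc μ * |A ^ p - B ^ p| * |⟪y, v⟫| ≤ μ * |A ^ p - B ^ p| * (‖y‖ * ‖v‖) := by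
          have : 0 ≤ μ * |A ^ p - B ^ p| := mul_nonneg hμ.le (abs_nonneg _)
          exact mul_le_mul_of_nonneg_left (abs_real_inner_le_norm _ _) this
      _ = μ * (|A ^ p - B ^ p| * b) * (h * ‖v‖) := by rw [hyb]; ring
      _ ≤ μ * ((max p 1 * max α 1 * 2 ^ p) * (max δ (max a b)) ^ (α * p) * |a - b|) *
            (h * ‖v‖) := by
          have h1 := aux_scalar hp hα hδ ha hb (p := p) (α := α) (δ := δ) (a := a) (b := b)
          have h2 : 0 ≤ h * ‖v‖ := by positivity
          exact mul_le_mul_of_nonneg_right (mul_le_mul_of_nonneg_left h1 hμ.le) h2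
      _ = (max p 1 * max α 1 * 2 ^ p) * μ * (max δ (max a b)) ^ (α * p) *
            (|a - b| * h) * ‖v‖ := by ring
      _ ≤ (max p 1 * max α 1 * 2 ^ p) * μ * Sg ^ ((r - 2) / r) *
            (|a - b| * h) * ‖v‖ := by
          have h2 : 0 ≤ (max p 1 * max α 1 * 2 ^ p) * μ := by positivity
          have h3 : 0 ≤ (|a - b| * h) * ‖v‖ := by positivity
          calc (max p 1 * max α 1 * 2 ^ p) * μ * (max δ (max a b)) ^ (α * p) *
                (|a - b| * h) * ‖v‖
              = ((max p 1 * max α 1 * 2 ^ p) * μ) * (max δ (max a b)) ^ (α * p) *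
                ((|a - b| * h) * ‖v‖) := by ring
            _ ≤ ((max p 1 * max α 1 * 2 ^ p) * μ) * (Sg ^ ((r - 2) / r)) *
                ((|a - b| * h) * ‖v‖) :=
                mul_le_mul_of_nonneg_right (mul_le_mul_of_nonneg_left hM2 h2) h3
            _ = (max p 1 * max α 1 * 2 ^ p) * μ * Sg ^ ((r - 2) / r) *
                (|a - b| * h) * ‖v‖ := by ring
      _ ≤ (max p 1 * max α 1 * 2 ^ p) * μ * Sg ^ ((r - 2) / r) * ‖x - y‖ * ‖v‖ := by
          have h2 : 0 ≤ (max p 1 * max α 1 * 2 ^ p) * μ * Sg ^ ((r - 2) / r) := by positivity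
          exact mul_le_mul_of_nonneg_right
            (mul_le_mul_of_nonneg_left habh h2) (norm_nonneg v)
  rw [hsplit]
  refine le_trans (abs_add_le _ _) ?_
  have e1 : |μ * A ^ p * ⟪x - y, v⟫| = μ * A ^ p * |⟪x - y, v⟫| := by
    rw [abs_mul, abs_mul, abs_of_pos hμ, abs_of_nonneg (rpow_nonneg hA0 p)]
  have e2 : |μ * (A ^ p - B ^ p) * ⟪y, v⟫| = μ * |A ^ p - B ^ p| * |⟪y, v⟫| := by
    rw [abs_mul, abs_mul, abs_of_pos hμ]
  rw [e1, e2, show (2 ^ p + max p 1 * max α 1 * 2 ^ p) * μ * Sg ^ ((r - 2) / r) * ‖x - y‖ * ‖v‖ =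
      2 ^ p * μ * Sg ^ ((r - 2) / r) * ‖x - y‖ * ‖v‖ +
      (max p 1 * max α 1 * 2 ^ p) * μ * Sg ^ ((r - 2) / r) * ‖x - y‖ * ‖v‖ from by ring]
  exact add_le_add hT1 hT2
end

section
/- Let V be a real inner product space, r ≥ 2 and α > 0 real numbers. There exist constants c, c' > 0 depending only on r and α such that for all δ ≥ 0, all h > 0, all μ̄ > 0 and all x, y ∈ V, defining S(x, v) = μ̄ (δ^α + h^{−α}‖x‖^α)^{(r−2)/α} ⟨x, v⟩, one has S(x, x − y) − S(y, x − y) ≥ c μ̄ (δ^α + h^{−α}‖x − y‖^α)^{(r−2)/α} ‖x − y‖² ≥ c' μ̄ h^{2−r} ‖x − y‖^r. -/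
open scoped RealInnerProductSpace

set_option maxHeartbeats 1000000 in
/-- Strong monotonicity (3.8) of the nonlinear dofi-dofi stabilization
`S(x, v) = μ̄ (δ^α + h^{−α}‖x‖^α)^{(r−2)/α} ⟨x, v⟩`, with constants
depending only on `r` and `α`. -/
theorem stabilization_strong_monotonicity
    {V : Type*} [NormedAddCommGroup V] [InnerProductSpace ℝ V]
    (r α : ℝ) (hr : 2 ≤ r) (hα : 0 < α) :
    ∃ c c' : ℝ, 0 < c ∧ 0 < c' ∧
      ∀ (δ h μ : ℝ), 0 ≤ δ → 0 < h → 0 < μ →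
        ∀ x y : V,
          c * μ * (δ ^ α + h ^ (-α) * ‖x - y‖ ^ α) ^ ((r - 2) / α) * ‖x - y‖ ^ 2 ≤
            μ * (δ ^ α + h ^ (-α) * ‖x‖ ^ α) ^ ((r - 2) / α) * ⟪x, x - y⟫ -
              μ * (δ ^ α + h ^ (-α) * ‖y‖ ^ α) ^ ((r - 2) / α) * ⟪y, x - y⟫ ∧
          c' * μ * h ^ (2 - r) * ‖x - y‖ ^ r ≤
            c * μ * (δ ^ α + h ^ (-α) * ‖x - y‖ ^ α) ^ ((r - 2) / α) * ‖x - y‖ ^ 2 := by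
  refine ⟨(2:ℝ) ^ (1 - r), (2:ℝ) ^ (1 - r), by positivity, by positivity, ?_⟩
  intro δ h μ hδ hh hμ x y
  have he0 : 0 ≤ (r - 2) / α := div_nonneg (by linarith) hα.le
  have hane : α ≠ 0 := hα.ne'
  set e := (r - 2) / α with hedef
  set s := ‖x - y‖ with hsdef
  set a := ‖x‖ with hadef
  set b := ‖y‖ with hbdef
  have hs : 0 ≤ s := norm_nonneg _
  have ha : 0 ≤ a := norm_nonneg _
  have hb : 0 ≤ b := norm_nonneg _
  have hhna : 0 ≤ h ^ (-α) := Real.rpow_nonneg hh.le _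
  have hδα : 0 ≤ δ ^ α := Real.rpow_nonneg hδ _
  have hbase : ∀ t : ℝ, 0 ≤ t → 0 ≤ δ ^ α + h ^ (-α) * t ^ α := by
    intro t ht
    have := Real.rpow_nonneg ht α
    positivity
  have hWmono : ∀ t u : ℝ, 0 ≤ t → t ≤ u →
      (δ ^ α + h ^ (-α) * t ^ α) ^ e ≤ (δ ^ α + h ^ (-α) * u ^ α) ^ e := by
    intro t u ht htu
    refine Real.rpow_le_rpow (hbase t ht) ?_ he0
    have h1 : t ^ α ≤ u ^ α := Real.rpow_le_rpow ht htu hα.le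
    have h2 := mul_le_mul_of_nonneg_left h1 hhna
    linarith
  -- inner product identities
  have hsq : s ^ 2 = a ^ 2 - 2 * ⟪x, y⟫ + b ^ 2 := by
    rw [hsdef, hadef, hbdef]; exact norm_sub_sq_real x y
  have hip1 : ⟪x, x - y⟫ = (a ^ 2 - b ^ 2 + s ^ 2) / 2 := by
    rw [inner_sub_right, real_inner_self_eq_norm_sq]; rw [hadef] at hsq ⊢; linarith
  have hip2 : ⟪y, x - y⟫ = (a ^ 2 - b ^ 2 - s ^ 2) / 2 := by
    rw [inner_sub_right, real_inner_self_eq_norm_sq, real_inner_comm]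
    rw [hbdef] at hsq ⊢; linarith
  set Ws := (δ ^ α + h ^ (-α) * s ^ α) ^ e with hWs
  set Wa := (δ ^ α + h ^ (-α) * a ^ α) ^ e with hWa
  set Wb := (δ ^ α + h ^ (-α) * b ^ α) ^ e with hWb
  have hWs0 : 0 ≤ Ws := Real.rpow_nonneg (hbase s hs) e
  have hWa0 : 0 ≤ Wa := Real.rpow_nonneg (hbase a ha) e
  have hWb0 : 0 ≤ Wb := Real.rpow_nonneg (hbase b hb) e
  -- same sign
  have hsign : 0 ≤ (Wa - Wb) * (a ^ 2 - b ^ 2) := by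
    rcases le_total a b with hab | hab
    · have h1 : Wa ≤ Wb := hWmono a b ha hab
      have h2 : a ^ 2 ≤ b ^ 2 := pow_le_pow_left₀ ha hab 2
      have h3 := mul_nonneg (sub_nonneg.2 h1) (sub_nonneg.2 h2)
      nlinarith [h3]
    · have h1 : Wb ≤ Wa := hWmono b a hb hab
      have h2 : b ^ 2 ≤ a ^ 2 := pow_le_pow_left₀ hb hab 2
      have h3 := mul_nonneg (sub_nonneg.2 h1) (sub_nonneg.2 h2)
      nlinarith [h3]
  -- key: 2^(2-r) * Ws ≤ Wa + Wb
  have hkey : (2:ℝ) ^ (2 - r) * Ws ≤ Wa + Wb := by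
    have hmax : s / 2 ≤ max a b := by
      have h1 : s ≤ a + b := norm_sub_le x y
      have h2 : a ≤ max a b := le_max_left a b
      have h3 : b ≤ max a b := le_max_right a b
      linarith
    have hWmax : (δ ^ α + h ^ (-α) * (s / 2) ^ α) ^ e ≤ Wa + Wb := by
      rcases le_total a b with hab | hab
      · have := hWmono (s / 2) b (by positivity) (by rw [max_eq_right hab] at hmax; exact hmax)
        rw [← hWb] at this; linarith
      · have := hWmono (s / 2) a (by positivity) (by rw [max_eq_left hab] at hmax; exact hmax)
        rw [← hWa] at this; linarith
    have hhalf : (2:ℝ) ^ (2 - r) * Ws ≤ (δ ^ α + h ^ (-α) * (s / 2) ^ α) ^ e := by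
      have hsub : (2:ℝ) ^ (-α) * (δ ^ α + h ^ (-α) * s ^ α) ≤ δ ^ α + h ^ (-α) * (s / 2) ^ α := by
        have h1 : (s / 2) ^ α = s ^ α * (2:ℝ) ^ (-α) := by
          rw [div_eq_mul_inv, Real.mul_rpow hs (by norm_num), ← Real.rpow_neg_one,
            ← Real.rpow_mul (by norm_num : (0:ℝ) ≤ 2)]
          ring_nf
        have h2 : (2:ℝ) ^ (-α) ≤ 1 :=
          Real.rpow_le_one_of_one_le_of_nonpos (by norm_num) (by linarith)
        have h3 : (0:ℝ) < (2:ℝ) ^ (-α) := Real.rpow_pos_of_pos (by norm_num) _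
        have h4 : 0 ≤ s ^ α := Real.rpow_nonneg hs _
        have h5 := mul_nonneg hδα (by linarith : (0:ℝ) ≤ 1 - (2:ℝ) ^ (-α))
        rw [h1]
        linarith [h5]
      have hexp1 : -α * e = 2 - r := by rw [hedef]; field_simp; ring
      have hexp0 : (2:ℝ) ^ (2 - r) = ((2:ℝ) ^ (-α)) ^ e := by
        rw [← Real.rpow_mul (by norm_num : (0:ℝ) ≤ 2), hexp1]
      calc (2:ℝ) ^ (2 - r) * Ws
          = ((2:ℝ) ^ (-α) * (δ ^ α + h ^ (-α) * s ^ α)) ^ e := by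
            rw [hexp0, hWs, ← Real.mul_rpow (by positivity) (hbase s hs)]
        _ ≤ (δ ^ α + h ^ (-α) * (s / 2) ^ α) ^ e :=
            Real.rpow_le_rpow (by positivity) hsub he0
    linarith
  constructor
  · rw [hip1, hip2]
    have h2r : (2:ℝ) ^ (2 - r) = 2 * (2:ℝ) ^ (1 - r) := by
      rw [show (2:ℝ) - r = 1 + (1 - r) by ring, Real.rpow_add (by norm_num), Real.rpow_one]
    rw [h2r] at hkey
    have key2 : 0 ≤ μ * ((Wa - Wb) * (a ^ 2 - b ^ 2)) := mul_nonneg hμ.le hsign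
    have key3 : 0 ≤ μ * (s ^ 2 * ((Wa + Wb) - 2 * (2:ℝ) ^ (1 - r) * Ws)) :=
      mul_nonneg hμ.le (mul_nonneg (sq_nonneg s) (by linarith))
    linarith [key2, key3]
  · rcases eq_or_lt_of_le hs with hs0 | hs0
    · rw [← hs0, Real.zero_rpow (show r ≠ 0 by intro h'; rw [h'] at hr; linarith)]
      norm_num
    · have h1 : (h ^ (-α) * s ^ α) ^ e ≤ Ws := by
        refine Real.rpow_le_rpow (by positivity) (by linarith [hδα]) he0
      have hexp1 : -α * e = 2 - r := by rw [hedef]; field_simp; ring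
      have hexp2 : α * e = r - 2 := by rw [hedef]; field_simp
      have h2 : (h ^ (-α) * s ^ α) ^ e = h ^ (2 - r) * s ^ (r - 2) := by
        rw [Real.mul_rpow hhna (Real.rpow_nonneg hs _), ← Real.rpow_mul hh.le,
          ← Real.rpow_mul hs, hexp1, hexp2]
      have h3 : s ^ (r - 2) * s ^ 2 = s ^ r := by
        rw [← Real.rpow_natCast s 2, ← Real.rpow_add hs0]
        norm_num
      have hh2r : 0 < h ^ (2 - r) := Real.rpow_pos_of_pos hh _
      have h4 : h ^ (2 - r) * s ^ r ≤ Ws * s ^ 2 := by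
        calc h ^ (2 - r) * s ^ r = h ^ (2 - r) * s ^ (r - 2) * s ^ 2 := by rw [mul_assoc, h3]
          _ ≤ Ws * s ^ 2 := by
              refine mul_le_mul_of_nonneg_right ?_ (sq_nonneg s)
              rw [← h2]; exact h1
      have hc : 0 ≤ (2:ℝ) ^ (1 - r) * μ :=
        (mul_pos (Real.rpow_pos_of_pos (by norm_num : (0:ℝ) < 2) (1 - r)) hμ).le
      have := mul_le_mul_of_nonneg_left h4 hc
      linarith
end

section
/- Let I be a finite set, h : I → ℝ with h_E > 0 for all E ∈ I, u, w : I → ℝ with u_E ≥ 0 and w_E ≥ 0 for all E ∈ I, and let r ≥ 2 and δ ≥ 0 be real numbers. Then Σ_{E∈I} (δ^r + h_E^{−r} u_E^r)^{(r−2)/r} u_E w_E ≤ ( Σ_{E∈I} h_E² δ^r + Σ_{E∈I} h_E^{2−r} u_E^r )^{(r−2)/(2r)} · ( Σ_{E∈I} (δ^r + h_E^{−r} u_E^r)^{(r−2)/r} u_E² )^{1/2} · ( Σ_{E∈I} h_E^{2−r} w_E^r )^{1/r}. -/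
open Finset Real

lemma two_term_holder {ι : Type*} (s : Finset ι) (a b : ι → ℝ)
    (ha : ∀ i, 0 ≤ a i) (hb : ∀ i, 0 ≤ b i) (t : ℝ) (ht0 : 0 ≤ t) (ht1 : t ≤ 1) :
    ∑ i ∈ s, a i ^ t * b i ^ (1 - t) ≤ (∑ i ∈ s, a i) ^ t * (∑ i ∈ s, b i) ^ (1 - t) := by
  rcases eq_or_lt_of_le ht0 with h0 | h0
  · simp [← h0]
  rcases eq_or_lt_of_le ht1 with h1 | h1
  · simp [h1]
  have ht1' : 0 < 1 - t := by linarith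
  have hpq : Real.HolderConjugate t⁻¹ (1 - t)⁻¹ := by
    rw [Real.holderConjugate_iff]
    constructor
    · exact (one_lt_inv₀ h0).2 h1
    · rw [inv_inv, inv_inv]; ring
  have H := Real.inner_le_Lp_mul_Lq_of_nonneg s hpq
    (f := fun i => a i ^ t) (g := fun i => b i ^ (1 - t))
    (fun i _ => Real.rpow_nonneg (ha i) t) (fun i _ => Real.rpow_nonneg (hb i) (1 - t))
  calc ∑ i ∈ s, a i ^ t * b i ^ (1 - t)
      ≤ (∑ i ∈ s, (a i ^ t) ^ t⁻¹) ^ (1 / t⁻¹) *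
        (∑ i ∈ s, (b i ^ (1 - t)) ^ (1 - t)⁻¹) ^ (1 / (1 - t)⁻¹) := H
    _ = (∑ i ∈ s, a i) ^ t * (∑ i ∈ s, b i) ^ (1 - t) := by
        rw [one_div, inv_inv, one_div, inv_inv]
        congr 2 <;> apply Finset.sum_congr rfl <;> intro i _
        · rw [← Real.rpow_mul (ha i), mul_inv_cancel₀ h0.ne', Real.rpow_one]
        · rw [← Real.rpow_mul (hb i), mul_inv_cancel₀ ht1'.ne', Real.rpow_one]

lemma three_term_holder {ι : Type*} (s : Finset ι) (a b c : ι → ℝ)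
    (ha : ∀ i, 0 ≤ a i) (hb : ∀ i, 0 ≤ b i) (hc : ∀ i, 0 ≤ c i)
    (p q t : ℝ) (hp : 0 ≤ p) (hq : 0 ≤ q) (ht0 : 0 < t) (ht1 : t < 1)
    (hsum : p + q + t = 1) :
    ∑ i ∈ s, a i ^ p * b i ^ q * c i ^ t ≤
      (∑ i ∈ s, a i) ^ p * (∑ i ∈ s, b i) ^ q * (∑ i ∈ s, c i) ^ t := by
  set m : ℝ := 1 - t with hm
  have hm0 : 0 < m := by simp [hm]; linarith
  have hpqm : p + q = m := by simp [hm]; linarith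
  set X : ι → ℝ := fun i => a i ^ (p / m) * b i ^ (q / m) with hX
  have hXnn : ∀ i, 0 ≤ X i := fun i =>
    mul_nonneg (Real.rpow_nonneg (ha i) _) (Real.rpow_nonneg (hb i) _)
  have key : ∀ i, a i ^ p * b i ^ q = X i ^ m := by
    intro i
    rw [hX]
    rw [Real.mul_rpow (Real.rpow_nonneg (ha i) _) (Real.rpow_nonneg (hb i) _),
      ← Real.rpow_mul (ha i), ← Real.rpow_mul (hb i),
      div_mul_cancel₀ _ hm0.ne', div_mul_cancel₀ _ hm0.ne']
  calc ∑ i ∈ s, a i ^ p * b i ^ q * c i ^ t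
      = ∑ i ∈ s, X i ^ m * c i ^ (1 - m) := by
        apply Finset.sum_congr rfl; intro i _
        rw [key i]; congr 1; · simp [hm]
    _ ≤ (∑ i ∈ s, X i) ^ m * (∑ i ∈ s, c i) ^ (1 - m) :=
        two_term_holder s X c hXnn hc m hm0.le (by simp [hm]; linarith)
    _ ≤ ((∑ i ∈ s, a i) ^ (p / m) * (∑ i ∈ s, b i) ^ (q / m)) ^ m *
          (∑ i ∈ s, c i) ^ (1 - m) := by
        apply mul_le_mul_of_nonneg_right _ (Real.rpow_nonneg (Finset.sum_nonneg fun i _ => hc i) _)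
        apply Real.rpow_le_rpow (Finset.sum_nonneg fun i _ => hXnn i) _ hm0.le
        have := two_term_holder s a b ha hb (p / m)
          (div_nonneg hp hm0.le)
          (by rw [div_le_one hm0]; linarith)
        have hq' : 1 - p / m = q / m := by field_simp; linarith
        rw [hq'] at this
        exact this
    _ = (∑ i ∈ s, a i) ^ p * (∑ i ∈ s, b i) ^ q * (∑ i ∈ s, c i) ^ t := by
        rw [Real.mul_rpow (Real.rpow_nonneg (Finset.sum_nonneg fun i _ => ha i) _)
            (Real.rpow_nonneg (Finset.sum_nonneg fun i _ => hb i) _),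
          ← Real.rpow_mul (Finset.sum_nonneg fun i _ => ha i),
          ← Real.rpow_mul (Finset.sum_nonneg fun i _ => hb i),
          div_mul_cancel₀ _ hm0.ne', div_mul_cancel₀ _ hm0.ne']
        congr 1; simp [hm]

/-- Discrete three-term Hölder inequality with exponents `(2r/(r−2), 2, r)`
(core of the Proposition establishing estimate (3.9)):
`Σ_E (δ^r + h_E^{−r} u_E^r)^{(r−2)/r} u_E w_E ≤
 (Σ_E h_E² δ^r + Σ_E h_E^{2−r} u_E^r)^{(r−2)/(2r)}
 (Σ_E (δ^r + h_E^{−r} u_E^r)^{(r−2)/r} u_E²)^{1/2}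
 (Σ_E h_E^{2−r} w_E^r)^{1/r}`. -/
theorem discrete_three_term_holder
    {ι : Type*} [Fintype ι]
    (h u w : ι → ℝ) (hh : ∀ E, 0 < h E) (hu : ∀ E, 0 ≤ u E) (hw : ∀ E, 0 ≤ w E)
    (r δ : ℝ) (hr : 2 ≤ r) (hδ : 0 ≤ δ) :
    ∑ E, (δ ^ r + h E ^ (-r) * u E ^ r) ^ ((r - 2) / r) * u E * w E ≤
      ((∑ E, h E ^ 2 * δ ^ r) + ∑ E, h E ^ (2 - r) * u E ^ r) ^ ((r - 2) / (2 * r)) *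
        (∑ E, (δ ^ r + h E ^ (-r) * u E ^ r) ^ ((r - 2) / r) * u E ^ 2) ^ (1 / 2 : ℝ) *
        (∑ E, h E ^ (2 - r) * w E ^ r) ^ (1 / r) := by
  have hr0 : (0:ℝ) < r := by linarith
  set S : ι → ℝ := fun E => δ ^ r + h E ^ (-r) * u E ^ r with hS
  have hSnn : ∀ E, 0 ≤ S E := fun E => by
    have := (hh E); have := hu E; positivity
  set p : ℝ := (r - 2) / (2 * r) with hp
  set q : ℝ := (1 / 2 : ℝ) with hq
  set t : ℝ := 1 / r with ht
  set a : ι → ℝ := fun E => h E ^ 2 * S E with ha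
  set b : ι → ℝ := fun E => S E ^ ((r - 2) / r) * u E ^ 2 with hb
  set c : ι → ℝ := fun E => h E ^ (2 - r) * w E ^ r with hc
  have hann : ∀ E, 0 ≤ a E := fun E => mul_nonneg (by positivity) (hSnn E)
  have hbnn : ∀ E, 0 ≤ b E := fun E =>
    mul_nonneg (Real.rpow_nonneg (hSnn E) _) (by positivity)
  have hcnn : ∀ E, 0 ≤ c E := fun E =>
    mul_nonneg (Real.rpow_nonneg (hh E).le _) (Real.rpow_nonneg (hw E) _)
  have hpnn : 0 ≤ p := by
    apply div_nonneg (by linarith) (by linarith)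
  have key : ∀ E : ι, S E ^ ((r - 2) / r) * u E * w E = a E ^ p * b E ^ q * c E ^ t := by
    intro E
    have hH2 : (h E ^ 2 : ℝ) = h E ^ (2:ℝ) := by
      rw [← Real.rpow_natCast (h E) 2]; norm_num
    have hu2 : (u E ^ 2 : ℝ) = u E ^ (2:ℝ) := by
      rw [← Real.rpow_natCast (u E) 2]; norm_num
    rw [ha, hb, hc]
    simp only
    rw [hH2, hu2,
      Real.mul_rpow (Real.rpow_nonneg (hh E).le _) (hSnn E),
      Real.mul_rpow (Real.rpow_nonneg (hSnn E) _) (Real.rpow_nonneg (hu E) _),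
      Real.mul_rpow (Real.rpow_nonneg (hh E).le _) (Real.rpow_nonneg (hw E) _),
      ← Real.rpow_mul (hh E).le, ← Real.rpow_mul (hSnn E), ← Real.rpow_mul (hu E),
      ← Real.rpow_mul (hh E).le, ← Real.rpow_mul (hw E)]
    have e1 : (2:ℝ) * q = 1 := by rw [hq]; norm_num
    have e2 : r * t = 1 := by rw [ht]; field_simp
    rw [e1, e2, Real.rpow_one, Real.rpow_one]
    -- now combine S and h powers
    have eS : S E ^ p * S E ^ ((r - 2) / r * q) = S E ^ ((r - 2) / r) := by
      have hpq' : (r - 2) / r * q = p := by rw [hq, hp]; ring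
      rw [hpq']
      have : S E ^ p * S E ^ p = (S E ^ p) ^ (2:ℝ) := by
        rw [show ((2:ℝ)) = ((2:ℕ):ℝ) by norm_num, Real.rpow_natCast]; ring
      rw [this, ← Real.rpow_mul (hSnn E)]
      congr 1
      rw [hp]; field_simp
    have eH : h E ^ ((2:ℝ) * p) * h E ^ ((2 - r) * t) = 1 := by
      rw [← Real.rpow_add (hh E)]
      have : (2:ℝ) * p + (2 - r) * t = 0 := by rw [hp, ht]; field_simp; ring
      rw [this, Real.rpow_zero]
    calc S E ^ ((r - 2) / r) * u E * w E
        = (h E ^ ((2:ℝ) * p) * h E ^ ((2 - r) * t)) *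
            (S E ^ p * S E ^ ((r - 2) / r * q)) * u E * w E := by
          rw [eS, eH]; ring
      _ = h E ^ ((2:ℝ) * p) * S E ^ p * (S E ^ ((r - 2) / r * q) * u E) *
            (h E ^ ((2 - r) * t) * w E) := by ring
  have hsumA : ((∑ E, h E ^ 2 * δ ^ r) + ∑ E, h E ^ (2 - r) * u E ^ r) = ∑ E, a E := by
    rw [← Finset.sum_add_distrib]
    apply Finset.sum_congr rfl; intro E _
    rw [ha]; simp only [hS]
    have hH2 : (h E ^ 2 : ℝ) = h E ^ (2:ℝ) := by
      rw [← Real.rpow_natCast (h E) 2]; norm_num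
    rw [hH2, mul_add]
    congr 1
    rw [← mul_assoc, ← Real.rpow_add (hh E)]
    ring_nf
  calc ∑ E, (δ ^ r + h E ^ (-r) * u E ^ r) ^ ((r - 2) / r) * u E * w E
      = ∑ E : ι, a E ^ p * b E ^ q * c E ^ t := by
        apply Finset.sum_congr rfl; intro E _; exact key E
    _ ≤ (∑ E, a E) ^ p * (∑ E, b E) ^ q * (∑ E, c E) ^ t := by
        apply three_term_holder _ a b c hann hbnn hcnn p q t hpnn (by norm_num [hq])
          (by rw [ht]; positivity)
          (by rw [ht, div_lt_one hr0]; linarith)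
          (by rw [hp, hq, ht]; field_simp; ring)
    _ = ((∑ E, h E ^ 2 * δ ^ r) + ∑ E, h E ^ (2 - r) * u E ^ r) ^ p *
          (∑ E, b E) ^ q * (∑ E, c E) ^ t := by rw [hsumA]
end

section
/- Let r ≥ 2 be a real number. For every ε > 0 there exists a constant C_ε > 0 depending only on r and ε such that for all a ≥ 0 and all s, t ≥ 0: s·(a+t)^{r−2}·t + t·(a+s)^{r−2}·s ≤ ε φ_a(s) + C_ε φ_a(t), where φ_a(u) = ∫_0^u (a+σ)^{r−2} σ dσ. In particular C_ε is independent of a. -/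
open MeasureTheory

/-- The shifted function `φ_a(t) = ∫_0^t (a+s)^{r−2} s ds`. -/
noncomputable def phi (r a t : ℝ) : ℝ := ∫ s in (0 : ℝ)..t, (a + s) ^ (r - 2) * s

lemma phi_integrand_continuous (r a : ℝ) (hr : 2 ≤ r) :
    Continuous (fun s : ℝ => (a + s) ^ (r - 2) * s) := by
  have h1 : Continuous (fun x : ℝ => x ^ (r - 2)) := by
    rw [continuous_iff_continuousAt]
    intro x
    exact Real.continuousAt_rpow_const x (r - 2) (Or.inr (by linarith))
  exact (h1.comp (continuous_const.add continuous_id)).mul continuous_id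

lemma phi_nonneg (r a t : ℝ) (hr : 2 ≤ r) (ha : 0 ≤ a) (ht : 0 ≤ t) : 0 ≤ phi r a t := by
  apply intervalIntegral.integral_nonneg ht
  intro s hs
  exact mul_nonneg (Real.rpow_nonneg (by linarith [hs.1] : (0:ℝ) ≤ a + s) _) hs.1

lemma phi_lower (r a t : ℝ) (hr : 2 ≤ r) (ha : 0 ≤ a) (ht : 0 ≤ t) :
    (a + t) ^ (r - 2) * t * t ≤ 2 ^ r * phi r a t := by
  have hr2 : (0:ℝ) ≤ r - 2 := by linarith
  have hint : ∀ u v : ℝ, IntervalIntegrable (fun s : ℝ => (a + s) ^ (r - 2) * s)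
      MeasureTheory.volume u v :=
    fun u v => (phi_integrand_continuous r a hr).intervalIntegrable u v
  have hsplit : phi r a t =
      (∫ s in (0:ℝ)..(t/2), (a + s) ^ (r - 2) * s) +
      ∫ s in (t/2)..t, (a + s) ^ (r - 2) * s :=
    (intervalIntegral.integral_add_adjacent_intervals (hint 0 (t/2)) (hint (t/2) t)).symm
  have h1 : 0 ≤ ∫ s in (0:ℝ)..(t/2), (a + s) ^ (r - 2) * s := by
    apply intervalIntegral.integral_nonneg (by linarith)
    intro s hs
    exact mul_nonneg (Real.rpow_nonneg (by linarith [hs.1] : (0:ℝ) ≤ a + s) _) hs.1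
  have h2 : (t - t/2) • ((a + t/2) ^ (r - 2) * (t/2)) ≤
      ∫ s in (t/2)..t, (a + s) ^ (r - 2) * s := by
    rw [← intervalIntegral.integral_const]
    apply intervalIntegral.integral_mono_on (by linarith) (intervalIntegrable_const) (hint _ _)
    intro x hx
    have hx1 := hx.1
    exact mul_le_mul (Real.rpow_le_rpow (by linarith) (by linarith) hr2)
      hx1 (by linarith) (Real.rpow_nonneg (by linarith) _)
  rw [smul_eq_mul] at h2
  have hphi : (t/2) * ((a + t/2) ^ (r - 2) * (t/2)) ≤ phi r a t := by
    have : t - t/2 = t/2 := by ring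
    rw [this] at h2
    linarith [hsplit, h1, h2]
  -- (a+t)^(r-2) ≤ 2^(r-2) * (a+t/2)^(r-2)
  have hB : (a + t) ^ (r - 2) ≤ 2 ^ (r - 2) * (a + t/2) ^ (r - 2) := by
    have hle : a + t ≤ 2 * (a + t/2) := by linarith
    have h := Real.rpow_le_rpow (by linarith) hle hr2
    rwa [Real.mul_rpow (by norm_num) (by linarith)] at h
  have h4 : (2:ℝ) ^ r = 2 ^ (r - 2) * 4 := by
    have : (2:ℝ) ^ r = 2 ^ (r - 2) * 2 ^ (2:ℝ) := by
      rw [← Real.rpow_add (by norm_num)]; ring_nf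
    rw [this]
    norm_num
  have hQ : (a + t) ^ (r - 2) * (t * t) ≤ (2 ^ (r - 2) * (a + t/2) ^ (r - 2)) * (t * t) :=
    mul_le_mul_of_nonneg_right hB (mul_self_nonneg t)
  have h5 : (2 ^ (r - 2) * 4) * (t/2 * ((a + t/2) ^ (r - 2) * (t/2))) ≤
      (2 ^ (r - 2) * 4) * phi r a t :=
    mul_le_mul_of_nonneg_left hphi (by positivity)
  rw [h4]
  nlinarith [hQ, h5]

/-- Young-type inequality (4.1a): for `r ≥ 2` and every `ε > 0` there is
`C_ε > 0`, independent of the shift `a`, with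
`s φ_a'(t) + t φ_a'(s) ≤ ε φ_a(s) + C_ε φ_a(t)` for all `a, s, t ≥ 0`,
where `φ_a'(t) = (a+t)^{r−2} t`. -/
theorem young_type_inequality_shifted
    (r : ℝ) (hr : 2 ≤ r) :
    ∀ ε : ℝ, 0 < ε → ∃ C : ℝ, 0 < C ∧
      ∀ a s t : ℝ, 0 ≤ a → 0 ≤ s → 0 ≤ t →
        s * ((a + t) ^ (r - 2) * t) + t * ((a + s) ^ (r - 2) * s) ≤
          ε * phi r a s + C * phi r a t := by
  intro ε hε
  set D : ℝ := max 1 (2 ^ (r + 1) / ε) with hD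
  have hD1 : (1:ℝ) ≤ D := le_max_left _ _
  have hD0 : (0:ℝ) < D := lt_of_lt_of_le one_pos hD1
  have hDpow : (0:ℝ) < D ^ (r - 1) := Real.rpow_pos_of_pos hD0 _
  refine ⟨2 ^ (r + 1) * D ^ (r - 1), by positivity, ?_⟩
  intro a s t ha hs ht
  have hr2 : (0:ℝ) ≤ r - 2 := by linarith
  have h2r : (0:ℝ) < 2 ^ r := Real.rpow_pos_of_pos (by norm_num) r
  have h2r1 : (2:ℝ) ^ (r + 1) = 2 ^ r * 2 := by
    rw [Real.rpow_add (by norm_num), Real.rpow_one]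
  have hps := phi_nonneg r a s hr ha hs
  have hpt := phi_nonneg r a t hr ha ht
  have hls := phi_lower r a s hr ha hs
  have hlt := phi_lower r a t hr ha ht
  by_cases hcase : s ≤ D * t
  · -- s controlled by t : absorb everything into C φ(t)
    have hQt : (0:ℝ) ≤ (a + t) ^ (r - 2) := Real.rpow_nonneg (by linarith) _
    have hsa : (a + s) ^ (r - 2) ≤ D ^ (r - 2) * (a + t) ^ (r - 2) := by
      have haD : a ≤ D * a := le_mul_of_one_le_left ha hD1
      have hle : a + s ≤ D * (a + t) := by nlinarith
      have h := Real.rpow_le_rpow (by linarith) hle hr2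
      rwa [Real.mul_rpow hD0.le (by linarith)] at h
    have hDr : D ^ (r - 2) * D = D ^ (r - 1) := by
      have h := (Real.rpow_add hD0 (r - 2) 1).symm
      rw [Real.rpow_one] at h
      rw [h]
      congr 1
      ring
    have e1 : s * ((a + t) ^ (r - 2) * t) ≤ D * ((a + t) ^ (r - 2) * t * t) := by
      calc s * ((a + t) ^ (r - 2) * t) ≤ (D * t) * ((a + t) ^ (r - 2) * t) :=
            mul_le_mul_of_nonneg_right hcase (mul_nonneg hQt ht)
        _ = D * ((a + t) ^ (r - 2) * t * t) := by ring
    have e2 : t * ((a + s) ^ (r - 2) * s) ≤ D ^ (r - 1) * ((a + t) ^ (r - 2) * t * t) := by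
      have h' : (a + s) ^ (r - 2) * s ≤ (D ^ (r - 2) * (a + t) ^ (r - 2)) * (D * t) :=
        mul_le_mul hsa hcase hs (by positivity)
      calc t * ((a + s) ^ (r - 2) * s)
          ≤ t * ((D ^ (r - 2) * (a + t) ^ (r - 2)) * (D * t)) :=
            mul_le_mul_of_nonneg_left h' ht
        _ = (D ^ (r - 2) * D) * ((a + t) ^ (r - 2) * t * t) := by ring
        _ = D ^ (r - 1) * ((a + t) ^ (r - 2) * t * t) := by rw [hDr]
    have hQtt : (0:ℝ) ≤ (a + t) ^ (r - 2) * t * t := by positivity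
    have hDle : D ≤ D ^ (r - 1) := by
      have := Real.rpow_le_rpow_of_exponent_le hD1 (by linarith : (1:ℝ) ≤ r - 1)
      rwa [Real.rpow_one] at this
    have hDQ : D * ((a + t) ^ (r - 2) * t * t) ≤ D ^ (r - 1) * ((a + t) ^ (r - 2) * t * t) :=
      mul_le_mul_of_nonneg_right hDle hQtt
    have h5 : 2 * D ^ (r - 1) * ((a + t) ^ (r - 2) * t * t) ≤
        2 * D ^ (r - 1) * (2 ^ r * phi r a t) :=
      mul_le_mul_of_nonneg_left hlt (by positivity)
    have h6 : 2 * D ^ (r - 1) * (2 ^ r * phi r a t) =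
        2 ^ (r + 1) * D ^ (r - 1) * phi r a t := by rw [h2r1]; ring
    have h7 : 0 ≤ ε * phi r a s := mul_nonneg hε.le hps
    linarith
  · -- t small compared with s : absorb into ε φ(s)
    push_neg at hcase
    have htD : t ≤ D * t := le_mul_of_one_le_left ht hD1
    have hts : t ≤ s := by linarith
    have hQs : (0:ℝ) ≤ (a + s) ^ (r - 2) := Real.rpow_nonneg (by linarith) _
    have hkey : 2 ^ (r + 1) * t ≤ ε * s := by
      have hD2 : 2 ^ (r + 1) / ε ≤ D := le_max_right _ _
      have h := mul_le_mul_of_nonneg_right hD2 ht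
      have h' : (2 ^ (r + 1) / ε) * t ≤ s := le_trans h (le_of_lt hcase)
      rw [div_mul_eq_mul_div, div_le_iff₀ hε] at h'
      linarith [h']
    have hbase : (a + t) ^ (r - 2) ≤ (a + s) ^ (r - 2) :=
      Real.rpow_le_rpow (by linarith) (by linarith) hr2
    have e1 : s * ((a + t) ^ (r - 2) * t) ≤ s * ((a + s) ^ (r - 2) * t) :=
      mul_le_mul_of_nonneg_left (mul_le_mul_of_nonneg_right hbase ht) hs
    have h7 : (2 ^ (r + 1) * t) * (s * (a + s) ^ (r - 2)) ≤
        (ε * s) * (s * (a + s) ^ (r - 2)) :=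
      mul_le_mul_of_nonneg_right hkey (mul_nonneg hs hQs)
    have h8 : ε * ((a + s) ^ (r - 2) * s * s) ≤ ε * (2 ^ r * phi r a s) :=
      mul_le_mul_of_nonneg_left hls hε.le
    have h9 : 2 ^ r * (2 * (t * s * (a + s) ^ (r - 2))) ≤ 2 ^ r * (ε * phi r a s) := by
      rw [h2r1] at h7
      nlinarith [h7, h8]
    have h10 : 2 * (t * s * (a + s) ^ (r - 2)) ≤ ε * phi r a s :=
      le_of_mul_le_mul_left h9 h2r
    have h11 : 0 ≤ (2 ^ (r + 1) * D ^ (r - 1)) * phi r a t := by positivity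
    linarith [e1, h10, h11]
end

section
/- Let r ≥ 2 be a real number. Then for all a ≥ 0 and all t ≥ 0: φ_a(2t) ≤ 2^r φ_a(t), where φ_a(u) = ∫_0^u (a+σ)^{r−2} σ dσ. In particular the Δ₂ constant of φ_a is bounded by 2^r uniformly in a. -/
open MeasureTheory

/-- Doubling (Δ₂) bound for the shifted functions, uniform in the shift `a`:
for `r ≥ 2`, `φ_a(2t) ≤ 2^r φ_a(t)` for all `a, t ≥ 0`. -/
theorem phi_doubling
    (r : ℝ) (hr : 2 ≤ r) :
    ∀ a t : ℝ, 0 ≤ a → 0 ≤ t →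
      phi r a (2 * t) ≤ (2 : ℝ) ^ r * phi r a t := by
  intro a t ha ht
  have hre : (0:ℝ) ≤ r - 2 := by linarith
  have hrpow : Continuous fun x : ℝ => x ^ (r - 2) :=
    continuous_iff_continuousAt.2 fun x =>
      Real.continuousAt_rpow_const x (r - 2) (Or.inr hre)
  have hcont : Continuous fun s : ℝ => (a + s) ^ (r - 2) * s :=
    (hrpow.comp (continuous_const.add continuous_id)).mul continuous_id
  have hcont2 : Continuous fun σ : ℝ => (a + 2 * σ) ^ (r - 2) * (2 * σ) :=
    (hrpow.comp (continuous_const.add (continuous_const.mul continuous_id))).mul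
      (continuous_const.mul continuous_id)
  have hcont3 : Continuous fun σ : ℝ => (2:ℝ) ^ (r - 2) * ((a + σ) ^ (r - 2) * σ) * 2 :=
    ((continuous_const.mul hcont).mul continuous_const)
  have key : phi r a (2 * t)
      = 2 * ∫ σ in (0:ℝ)..t, (a + 2 * σ) ^ (r - 2) * (2 * σ) := by
    unfold phi
    have := intervalIntegral.smul_integral_comp_mul_left
      (a := (0:ℝ)) (b := t) (fun s => (a + s) ^ (r - 2) * s) 2
    simp only [mul_zero, smul_eq_mul] at this
    rw [← this]
  rw [key]
  have hmono : (∫ σ in (0:ℝ)..t, (a + 2 * σ) ^ (r - 2) * (2 * σ))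
      ≤ ∫ σ in (0:ℝ)..t, (2:ℝ) ^ (r - 2) * ((a + σ) ^ (r - 2) * σ) * 2 := by
    apply intervalIntegral.integral_mono_on ht
      (hcont2.intervalIntegrable _ _) (hcont3.intervalIntegrable _ _)
    intro σ hσ
    have hσ0 : 0 ≤ σ := hσ.1
    have h1 : (a + 2 * σ) ^ (r - 2) ≤ (2:ℝ) ^ (r - 2) * (a + σ) ^ (r - 2) := by
      rw [← Real.mul_rpow (by norm_num) (by linarith)]
      exact Real.rpow_le_rpow (by linarith) (by linarith) hre
    calc (a + 2 * σ) ^ (r - 2) * (2 * σ)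
        ≤ (2:ℝ) ^ (r - 2) * (a + σ) ^ (r - 2) * (2 * σ) := by
          apply mul_le_mul_of_nonneg_right h1 (by linarith)
      _ = (2:ℝ) ^ (r - 2) * ((a + σ) ^ (r - 2) * σ) * 2 := by ring
  have hint : (∫ σ in (0:ℝ)..t, (2:ℝ) ^ (r - 2) * ((a + σ) ^ (r - 2) * σ) * 2)
      = (2:ℝ) ^ (r - 2) * 2 * phi r a t := by
    unfold phi
    rw [show (fun σ : ℝ => (2:ℝ) ^ (r - 2) * ((a + σ) ^ (r - 2) * σ) * 2)
        = fun σ : ℝ => ((2:ℝ) ^ (r - 2) * 2) * ((a + σ) ^ (r - 2) * σ) from by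
          funext σ; ring]
    rw [intervalIntegral.integral_const_mul]
  have h2r : (2:ℝ) ^ r = 2 * ((2:ℝ) ^ (r - 2) * 2) := by
    have := Real.rpow_add (by norm_num : (0:ℝ) < 2) (r - 2) 2
    rw [show r - 2 + 2 = r from by ring] at this
    rw [this, show ((2:ℝ) ^ (2:ℝ)) = 4 from by
      rw [show (2:ℝ) = ((2:ℕ):ℝ) from by norm_num, Real.rpow_natCast]; norm_num]
    ring
  calc 2 * ∫ σ in (0:ℝ)..t, (a + 2 * σ) ^ (r - 2) * (2 * σ)
      ≤ 2 * ((2:ℝ) ^ (r - 2) * 2 * phi r a t) := by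
        rw [← hint]; linarith [hmono]
    _ = (2:ℝ) ^ r * phi r a t := by rw [h2r]; ring
end

section
/- Let r ≥ 2 be a real number. Then for all a ≥ 0 and all t ≥ 0: 2^{−r} (a+t)^{r−2} t² ≤ φ_a(t) ≤ (a+t)^{r−2} t², where φ_a(t) = ∫_0^t (a+s)^{r−2} s ds. -/
open MeasureTheory

/-- Two-sided equivalence, uniform in the shift `a`: for `r ≥ 2`,
`2^{−r} (a+t)^{r−2} t² ≤ φ_a(t) ≤ (a+t)^{r−2} t²` for all `a, t ≥ 0`. -/
theorem phi_equiv_weight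
    (r : ℝ) (hr : 2 ≤ r) :
    ∀ a t : ℝ, 0 ≤ a → 0 ≤ t →
      (2 : ℝ) ^ (-r) * (a + t) ^ (r - 2) * t ^ 2 ≤ phi r a t ∧
        phi r a t ≤ (a + t) ^ (r - 2) * t ^ 2 := by
  intro a t ha ht
  have hr2 : (0 : ℝ) ≤ r - 2 := by linarith
  have cont : Continuous fun s : ℝ => (a + s) ^ (r - 2) * s :=
    ((continuous_const.add continuous_id).rpow_const (fun x => Or.inr hr2)).mul continuous_id
  have hint : ∀ u v : ℝ, IntervalIntegrable (fun s => (a + s) ^ (r - 2) * s) volume u v :=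
    fun u v => cont.intervalIntegrable u v
  have h2r : (2 : ℝ) ^ (-r) * (2 : ℝ) ^ (r - 2) = 1 / 4 := by
    rw [← Real.rpow_add two_pos,
      show (-r + (r - 2)) = ((-2 : ℤ) : ℝ) by push_cast; ring, Real.rpow_intCast]
    norm_num
  constructor
  · -- lower bound
    set c : ℝ := ((a + t) / 2) ^ (r - 2) with hc
    have hcnn : 0 ≤ c := Real.rpow_nonneg (by linarith) _
    have hcmul : c * (2 : ℝ) ^ (r - 2) = (a + t) ^ (r - 2) := by
      rw [hc, ← Real.mul_rpow (by linarith) (by norm_num)]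
      norm_num
    have h1 : phi r a t = (∫ s in (0:ℝ)..t/2, (a+s)^(r-2)*s)
        + ∫ s in (t/2:ℝ)..t, (a+s)^(r-2)*s := by
      rw [phi, ← intervalIntegral.integral_add_adjacent_intervals (hint 0 (t/2)) (hint (t/2) t)]
    have h2 : 0 ≤ ∫ s in (0:ℝ)..t/2, (a+s)^(r-2)*s := by
      apply intervalIntegral.integral_nonneg (by linarith)
      intro s hs
      exact mul_nonneg (Real.rpow_nonneg (by linarith [hs.1]) _) hs.1
    have h3 : (∫ s in (t/2:ℝ)..t, c * s) ≤ ∫ s in (t/2:ℝ)..t, (a+s)^(r-2)*s := by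
      apply intervalIntegral.integral_mono_on (by linarith)
        ((continuous_const.mul continuous_id).intervalIntegrable _ _) (hint _ _)
      intro s hs
      have hs1 : t/2 ≤ s := hs.1
      exact mul_le_mul_of_nonneg_right
        (Real.rpow_le_rpow (by linarith) (by linarith) hr2) (by simp only [id_eq]; linarith)
    have h4 : (∫ s in (t/2:ℝ)..t, c * s) = c * ((t^2 - (t/2)^2) / 2) := by
      rw [intervalIntegral.integral_const_mul, integral_id]
    have h5 : (2 : ℝ) ^ (-r) * (a + t) ^ (r - 2) * t ^ 2 = c * t ^ 2 / 4 := by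
      rw [← hcmul,
        show (2:ℝ)^(-r) * (c * (2:ℝ)^(r-2)) * t^2 = c * ((2:ℝ)^(-r) * (2:ℝ)^(r-2)) * t^2 by ring,
        h2r]
      ring
    have hct : 0 ≤ c * t ^ 2 := mul_nonneg hcnn (sq_nonneg t)
    rw [h1, h5]
    nlinarith [h3, h4]
  · -- upper bound
    have h3 : phi r a t ≤ ∫ s in (0:ℝ)..t, (a+t)^(r-2) * s := by
      rw [phi]
      apply intervalIntegral.integral_mono_on ht (hint _ _)
        ((continuous_const.mul continuous_id).intervalIntegrable _ _)
      intro s hs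
      exact mul_le_mul_of_nonneg_right
        (Real.rpow_le_rpow (by linarith [hs.1]) (by linarith [hs.2]) hr2) hs.1
    have h4 : (∫ s in (0:ℝ)..t, (a+t)^(r-2) * s) = (a+t)^(r-2) * (t^2 / 2) := by
      rw [intervalIntegral.integral_const_mul, integral_id]
      ring
    have hnn : 0 ≤ (a+t)^(r-2) := Real.rpow_nonneg (by linarith) _
    nlinarith [sq_nonneg t]
end

section
/- Let V be a real inner product space, r ≥ 2 and δ ≥ 0 real numbers, σ_c > 0, σ_m > 0, and let σ : V → V satisfy, for all τ, η ∈ V: (H1) ‖σ(τ) − σ(η)‖ ≤ σ_c (δ^r + ‖τ‖^r + ‖η‖^r)^{(r−2)/r} ‖τ − η‖ and (H2) ⟨σ(τ) − σ(η), τ − η⟩ ≥ σ_m (δ^r + ‖τ‖^r + ‖η‖^r)^{(r−2)/r} ‖τ − η‖². Then there exist constants c, C > 0 depending only on σ_c, σ_m and r such that for all τ, η ∈ V: c (δ + ‖τ‖ + ‖η‖)^{r−2} ‖τ − η‖ ≤ ‖σ(τ) − σ(η)‖ ≤ C (δ + ‖τ‖ + ‖η‖)^{r−2} ‖τ − η‖.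 -/
open scoped RealInnerProductSpace

private lemma rpow_superadd {a b p : ℝ} (ha : 0 ≤ a) (hb : 0 ≤ b) (hp : 1 ≤ p) :
    a ^ p + b ^ p ≤ (a + b) ^ p := by
  lift a to NNReal using ha
  lift b to NNReal using hb
  have := NNReal.add_rpow_le_rpow_add a b hp
  exact_mod_cast this

private lemma weight_le {x y z r : ℝ} (hx : 0 ≤ x) (hy : 0 ≤ y) (hz : 0 ≤ z)
    (hr : 2 ≤ r) :
    (x ^ r + y ^ r + z ^ r) ^ ((r - 2) / r) ≤ (x + y + z) ^ (r - 2) := by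
  have hr0 : 0 < r := by linarith
  have hS : x ^ r + y ^ r + z ^ r ≤ (x + y + z) ^ r := by
    have h1 : x ^ r + y ^ r ≤ (x + y) ^ r := rpow_superadd hx hy (by linarith)
    have h2 : (x + y) ^ r + z ^ r ≤ (x + y + z) ^ r :=
      rpow_superadd (by linarith) hz (by linarith)
    linarith
  have hS0 : 0 ≤ x ^ r + y ^ r + z ^ r := by
    have := Real.rpow_nonneg hx r
    have := Real.rpow_nonneg hy r
    have := Real.rpow_nonneg hz r
    linarith
  have hexp : 0 ≤ (r - 2) / r := div_nonneg (by linarith) hr0.le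
  calc (x ^ r + y ^ r + z ^ r) ^ ((r - 2) / r)
      ≤ ((x + y + z) ^ r) ^ ((r - 2) / r) := Real.rpow_le_rpow hS0 hS hexp
    _ = (x + y + z) ^ (r - 2) := by
        rw [← Real.rpow_mul (by linarith), mul_div_cancel₀ _ hr0.ne']

private lemma weight_ge {x y z r : ℝ} (hx : 0 ≤ x) (hy : 0 ≤ y) (hz : 0 ≤ z)
    (hr : 2 ≤ r) :
    (x + y + z) ^ (r - 2) ≤ 3 ^ (r - 2) * (x ^ r + y ^ r + z ^ r) ^ ((r - 2) / r) := by
  have hr0 : 0 < r := by linarith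
  have hS0 : 0 ≤ x ^ r + y ^ r + z ^ r := by
    have := Real.rpow_nonneg hx r
    have := Real.rpow_nonneg hy r
    have := Real.rpow_nonneg hz r
    linarith
  have key : ∀ a : ℝ, 0 ≤ a → a ^ r ≤ x ^ r + y ^ r + z ^ r →
      a ≤ (x ^ r + y ^ r + z ^ r) ^ ((1:ℝ)/r) := by
    intro a ha hle
    have := Real.rpow_le_rpow (Real.rpow_nonneg ha r) hle (by positivity : (0:ℝ) ≤ 1/r)
    rwa [← Real.rpow_mul ha, mul_one_div, div_self hr0.ne', Real.rpow_one] at this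
  have hx' := key x hx (by nlinarith [Real.rpow_nonneg hy r, Real.rpow_nonneg hz r])
  have hy' := key y hy (by nlinarith [Real.rpow_nonneg hx r, Real.rpow_nonneg hz r])
  have hz' := key z hz (by nlinarith [Real.rpow_nonneg hx r, Real.rpow_nonneg hy r])
  have hsum : x + y + z ≤ 3 * (x ^ r + y ^ r + z ^ r) ^ ((1:ℝ)/r) := by linarith
  calc (x + y + z) ^ (r - 2)
      ≤ (3 * (x ^ r + y ^ r + z ^ r) ^ ((1:ℝ)/r)) ^ (r - 2) :=
        Real.rpow_le_rpow (by linarith) hsum (by linarith)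
    _ = 3 ^ (r - 2) * (x ^ r + y ^ r + z ^ r) ^ ((r - 2) / r) := by
        rw [Real.mul_rpow (by norm_num) (by positivity), ← Real.rpow_mul hS0]
        ring_nf

/-- Continuity equivalence (4.3a) of Lemma 4.3 (Hirn): if `σ : V → V` satisfies
the Hölder continuity (H1) and strong monotonicity (H2) bounds with weight
`(δ^r + ‖τ‖^r + ‖η‖^r)^{(r−2)/r}`, then there are constants `c, C > 0`
depending only on `σ_c, σ_m, r` such that
`c (δ + ‖τ‖ + ‖η‖)^{r−2} ‖τ−η‖ ≤ ‖σ(τ) − σ(η)‖ ≤ C (δ + ‖τ‖ + ‖η‖)^{r−2} ‖τ−η‖`. -/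
theorem hirn_continuity_equivalence
    {V : Type*} [NormedAddCommGroup V] [InnerProductSpace ℝ V]
    (r σc σm : ℝ) (hr : 2 ≤ r) (hσc : 0 < σc) (hσm : 0 < σm) :
    ∃ c C : ℝ, 0 < c ∧ 0 < C ∧
      ∀ δ : ℝ, 0 ≤ δ → ∀ σ : V → V,
        (∀ τ η : V,
          ‖σ τ - σ η‖ ≤ σc * (δ ^ r + ‖τ‖ ^ r + ‖η‖ ^ r) ^ ((r - 2) / r) * ‖τ - η‖) →
        (∀ τ η : V,
          σm * (δ ^ r + ‖τ‖ ^ r + ‖η‖ ^ r) ^ ((r - 2) / r) * ‖τ - η‖ ^ 2 ≤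
            ⟪σ τ - σ η, τ - η⟫) →
        ∀ τ η : V,
          c * (δ + ‖τ‖ + ‖η‖) ^ (r - 2) * ‖τ - η‖ ≤ ‖σ τ - σ η‖ ∧
            ‖σ τ - σ η‖ ≤ C * (δ + ‖τ‖ + ‖η‖) ^ (r - 2) * ‖τ - η‖ := by
  refine ⟨σm / 3 ^ (r - 2), σc, by positivity, hσc, ?_⟩
  intro δ hδ σ hH1 hH2 τ η
  set W : ℝ := (δ ^ r + ‖τ‖ ^ r + ‖η‖ ^ r) ^ ((r - 2) / r) with hW
  have hW0 : 0 ≤ W := Real.rpow_nonneg (by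
    have := Real.rpow_nonneg hδ r
    have := Real.rpow_nonneg (norm_nonneg τ) r
    have := Real.rpow_nonneg (norm_nonneg η) r
    linarith) _
  have hle := weight_le hδ (norm_nonneg τ) (norm_nonneg η) hr
  have hge := weight_ge hδ (norm_nonneg τ) (norm_nonneg η) hr
  constructor
  · rcases eq_or_lt_of_le (norm_nonneg (τ - η)) with h0 | h0
    · rw [← h0, mul_zero]; exact norm_nonneg _
    · have hinner := hH2 τ η
      have hcs : ⟪σ τ - σ η, τ - η⟫ ≤ ‖σ τ - σ η‖ * ‖τ - η‖ := real_inner_le_norm _ _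
      have hdiv : σm * W * ‖τ - η‖ ≤ ‖σ τ - σ η‖ := by
        have : σm * W * ‖τ - η‖ * ‖τ - η‖ ≤ ‖σ τ - σ η‖ * ‖τ - η‖ := by
          nlinarith
        exact le_of_mul_le_mul_right this h0
      have h3 : (0:ℝ) < 3 ^ (r - 2) := by positivity
      have hc : σm / 3 ^ (r - 2) * (δ + ‖τ‖ + ‖η‖) ^ (r - 2) ≤ σm * W := by
        rw [div_mul_eq_mul_div, div_le_iff₀ h3]
        calc σm * (δ + ‖τ‖ + ‖η‖) ^ (r - 2) ≤ σm * (3 ^ (r - 2) * W) := by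
              exact mul_le_mul_of_nonneg_left hge hσm.le
          _ = σm * W * 3 ^ (r - 2) := by ring
      calc σm / 3 ^ (r - 2) * (δ + ‖τ‖ + ‖η‖) ^ (r - 2) * ‖τ - η‖
          ≤ σm * W * ‖τ - η‖ := mul_le_mul_of_nonneg_right hc h0.le
        _ ≤ ‖σ τ - σ η‖ := hdiv
  · calc ‖σ τ - σ η‖ ≤ σc * W * ‖τ - η‖ := hH1 τ η
      _ ≤ σc * (δ + ‖τ‖ + ‖η‖) ^ (r - 2) * ‖τ - η‖ := by
          apply mul_le_mul_of_nonneg_right _ (norm_nonneg _)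
          exact mul_le_mul_of_nonneg_left hle hσc.le
end
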